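/- arXiv:0910.3980 — 6 statements merged into one kernel-verified Lean document; each statement's English description precedes it below -/
import Mathlib

section
/- For every admissible function f : ℕ → ℝ, the inclusion map ℓ²_f → ℓ² is a compact continuous linear operator. -/
noncomputable section
open scoped ENNReal
set_option maxHeartbeats 1000000

/-- `f` is admissible: positive, monotone nondecreasing, and unbounded. -/
def Admissible (f : ℕ → ℝ) : Prop :=
  (∀ n, 0 < f n) ∧ Monotone f ∧ ¬ BddAbove (Set.range f)

/-- Membership in the weighted space `ℓ²_f`: `∑ f n * x n ^ 2 < ∞`. -/
def MemW (f : ℕ → ℝ) (x : ℕ → ℝ) : Prop :=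
  Summable fun n => f n * x n ^ 2

/-- The `ℓ²_f` norm of a sequence, `(∑ f n * x n ^ 2)^(1/2)`. -/
noncomputable def wNorm (f : ℕ → ℝ) (x : ℕ → ℝ) : ℝ :=
  Real.sqrt (∑' n, f n * x n ^ 2)

/-- Equivalence of positive weight functions: `(1/c) f₁ ≤ f₂ ≤ c f₁`. -/
def FEquiv (f₁ f₂ : ℕ → ℝ) : Prop :=
  ∃ c : ℝ, 0 < c ∧ ∀ n, (1 / c) * f₁ n ≤ f₂ n ∧ f₂ n ≤ c * f₁ n

/-- The Hilbert space `ℓ²` of square-summable real sequences. -/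
abbrev L2 := lp (fun _ : ℕ => ℝ) 2

lemma rpow_two_toReal (a : ℝ) : ‖a‖ ^ (2 : ℝ≥0∞).toReal = a ^ 2 := by
  rw [show (2 : ℝ≥0∞).toReal = (2 : ℝ) by norm_num, Real.rpow_two, Real.norm_eq_abs, sq_abs]

lemma L2_sq_summable (x : L2) : Summable fun n => (x n : ℝ) ^ 2 := by
  have h := (lp.memℓp x).summable (by norm_num : 0 < (2 : ℝ≥0∞).toReal)
  simpa only [rpow_two_toReal] using h

lemma L2_norm_eq (x : L2) : ‖x‖ = Real.sqrt (∑' n, (x n : ℝ) ^ 2) := by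
  rw [lp.norm_eq_tsum_rpow (by norm_num : 0 < (2 : ℝ≥0∞).toReal) x]
  simp only [rpow_two_toReal]
  rw [show 1 / (2 : ℝ≥0∞).toReal = 1 / (2 : ℝ) by norm_num, ← Real.sqrt_eq_rpow]

/-- A sequence with summable squares belongs to ℓ². -/
lemma memℓp_of_sq_summable {x : ℕ → ℝ} (h : Summable fun n => x n ^ 2) : Memℓp x 2 := by
  apply memℓp_gen
  simpa only [rpow_two_toReal] using h

lemma MemW.sq_summable {f : ℕ → ℝ} (hf : Admissible f) {x : ℕ → ℝ} (hx : MemW f x) :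
    Summable fun n => x n ^ 2 := by
  refine Summable.of_nonneg_of_le (fun n => sq_nonneg _) (fun n => ?_)
    (hx.mul_left (f 0)⁻¹)
  have h0 : 0 < f 0 := hf.1 0
  have hmono : f 0 ≤ f n := hf.2.1 (Nat.zero_le n)
  rw [← mul_assoc]
  have h1 : 1 ≤ (f 0)⁻¹ * f n := (one_le_inv_mul₀ h0).2 hmono
  nlinarith [sq_nonneg (x n)]

lemma wNorm_nonneg (f : ℕ → ℝ) (x : ℕ → ℝ) : 0 ≤ wNorm f x := Real.sqrt_nonneg _

lemma wNorm_sq {f : ℕ → ℝ} (hf : Admissible f) {x : ℕ → ℝ} (hx : MemW f x) :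
    wNorm f x ^ 2 = ∑' n, f n * x n ^ 2 := by
  rw [wNorm, Real.sq_sqrt]
  exact tsum_nonneg fun n => mul_nonneg (hf.1 n).le (sq_nonneg _)

/-- Key tail estimate. -/
lemma tail_bound {f : ℕ → ℝ} (hf : Admissible f) {x : ℕ → ℝ} (hx : MemW f x)
    {M : ℝ} (hxM : wNorm f x ≤ M) (N : ℕ) :
    ∑' n, x (n + N) ^ 2 ≤ M ^ 2 / f N := by
  have hfN : 0 < f N := hf.1 N
  have hsum : Summable fun n => f (n + N) * x (n + N) ^ 2 := (summable_nat_add_iff N).2 hx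
  have hsq : Summable fun n => x (n + N) ^ 2 :=
    (summable_nat_add_iff N).2 (hx.sq_summable hf)
  have h1 : ∑' n, x (n + N) ^ 2 ≤ (f N)⁻¹ * ∑' n, f (n + N) * x (n + N) ^ 2 := by
    rw [← tsum_mul_left]
    refine Summable.tsum_le_tsum (fun n => ?_) hsq (hsum.mul_left _)
    rw [← mul_assoc]
    have hm : f N ≤ f (n + N) := hf.2.1 (Nat.le_add_left N n)
    have h1 : 1 ≤ (f N)⁻¹ * f (n + N) := (one_le_inv_mul₀ hfN).2 hm
    nlinarith [sq_nonneg (x (n + N))]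
  have h2 : ∑' n, f (n + N) * x (n + N) ^ 2 ≤ ∑' n, f n * x n ^ 2 := by
    have := Summable.sum_add_tsum_nat_add (f := fun n => f n * x n ^ 2) N hx
    have hpos : 0 ≤ ∑ i ∈ Finset.range N, f i * x i ^ 2 :=
      Finset.sum_nonneg fun i _ => mul_nonneg (hf.1 i).le (sq_nonneg _)
    linarith
  have h3 : ∑' n, f n * x n ^ 2 ≤ M ^ 2 := by
    rw [← wNorm_sq hf hx]
    have h0 : 0 ≤ wNorm f x := wNorm_nonneg f x
    nlinarith
  calc ∑' n, x (n + N) ^ 2 ≤ (f N)⁻¹ * ∑' n, f (n + N) * x (n + N) ^ 2 := h1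
    _ ≤ (f N)⁻¹ * M ^ 2 := by
        apply mul_le_mul_of_nonneg_left (le_trans h2 h3) (inv_nonneg.2 hfN.le)
    _ = M ^ 2 / f N := by ring

/-- Norm bound for the inclusion. -/
lemma norm_le_wNorm {f : ℕ → ℝ} (hf : Admissible f) (x : L2) (hx : MemW f x) :
    ‖x‖ ≤ (Real.sqrt (f 0))⁻¹ * wNorm f x := by
  have h0 : 0 < f 0 := hf.1 0
  rw [L2_norm_eq, wNorm, ← Real.sqrt_inv, ← Real.sqrt_mul (by positivity)]
  apply Real.sqrt_le_sqrt
  rw [← tsum_mul_left]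
  refine Summable.tsum_le_tsum (fun n => ?_) (L2_sq_summable x) (hx.mul_left _)
  rw [← mul_assoc]
  have h1 : 1 ≤ (f 0)⁻¹ * f n := (one_le_inv_mul₀ h0).2 (hf.2.1 (Nat.zero_le n))
  nlinarith [sq_nonneg ((x : ℕ → ℝ) n)]

/-- For every admissible `f`, the inclusion `ℓ²_f → ℓ²` is a well-defined
compact continuous linear operator: `ℓ²_f ⊆ ℓ²`, the inclusion is bounded,
and it maps bounded subsets of `ℓ²_f` to relatively compact subsets of `ℓ²`. -/
theorem inclusion_compact_continuous (f : ℕ → ℝ) (hf : Admissible f) :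
    (∀ x : ℕ → ℝ, MemW f x → Memℓp x 2) ∧
    (∃ C : ℝ, 0 < C ∧ ∀ x : L2, MemW f x → ‖x‖ ≤ C * wNorm f x) ∧
    (∀ s : Set L2, (∀ x ∈ s, MemW f x) →
      (∃ M : ℝ, ∀ x ∈ s, wNorm f x ≤ M) → IsCompact (closure s)) := by
  obtain ⟨hpos, hmono, hunb⟩ := hf
  refine ⟨fun x hx => memℓp_of_sq_summable (hx.sq_summable ⟨hpos, hmono, hunb⟩), ?_, ?_⟩
  · exact ⟨(Real.sqrt (f 0))⁻¹, inv_pos.2 (Real.sqrt_pos.2 (hpos 0)), fun x hx =>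
      norm_le_wNorm ⟨hpos, hmono, hunb⟩ x hx⟩
  intro s hs hM
  have hA : Admissible f := ⟨hpos, hmono, hunb⟩
  suffices h : TotallyBounded s from
    TotallyBounded.isCompact_of_isClosed h.closure isClosed_closure
  rcases s.eq_empty_or_nonempty with rfl | ⟨x₀, hx₀⟩
  · exact totallyBounded_empty
  obtain ⟨M, hM⟩ := hM
  have hM0 : 0 ≤ M := le_trans (wNorm_nonneg f x₀) (hM x₀ hx₀)
  rw [Metric.totallyBounded_iff]
  intro ε hε
  obtain ⟨y, ⟨N, rfl⟩, hN⟩ := not_bddAbove_iff.1 hunb (8 * M ^ 2 / ε ^ 2)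
  have hfN : 0 < f N := hpos N
  have htail : ∀ x : L2, x ∈ s → ∑' n, (x : ℕ → ℝ) (n + N) ^ 2 ≤ M ^ 2 / f N :=
    fun x hx => tail_bound hA (hs x hx) (hM x hx) N
  have hMN : M ^ 2 / f N < ε ^ 2 / 8 := by
    rw [div_lt_div_iff₀ hfN (by norm_num : (0:ℝ) < 8)]
    have h8 : 8 * M ^ 2 < f N * ε ^ 2 := (div_lt_iff₀ (by positivity)).1 hN
    nlinarith
  -- the projection onto the first N coordinates
  set Φ : L2 → EuclideanSpace ℝ (Fin N) := fun x => WithLp.toLp 2 (fun i => (x : ℕ → ℝ) i) with hΦ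
  have hΦhead : ∀ u v : L2,
      ∑ i ∈ Finset.range N, ((u : ℕ → ℝ) i - (v : ℕ → ℝ) i) ^ 2 = dist (Φ u) (Φ v) ^ 2 := by
    intro u v
    rw [EuclideanSpace.dist_eq, Real.sq_sqrt (Finset.sum_nonneg fun i _ => sq_nonneg _)]
    rw [← Fin.sum_univ_eq_sum_range fun n => ((u : ℕ → ℝ) n - (v : ℕ → ℝ) n) ^ 2]
    exact Finset.sum_congr rfl fun i _ => by
      rw [Real.dist_eq, sq_abs]
  have hΦnorm : ∀ x : L2, ‖Φ x‖ ≤ ‖x‖ := by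
    intro x
    rw [EuclideanSpace.norm_eq, L2_norm_eq]
    apply Real.sqrt_le_sqrt
    calc ∑ i : Fin N, ‖(x : ℕ → ℝ) i‖ ^ 2
        = ∑ i ∈ Finset.range N, (x : ℕ → ℝ) i ^ 2 := by
          rw [← Fin.sum_univ_eq_sum_range fun n => (x : ℕ → ℝ) n ^ 2]
          exact Finset.sum_congr rfl fun i _ => by rw [Real.norm_eq_abs, sq_abs]
      _ ≤ ∑' n, (x : ℕ → ℝ) n ^ 2 :=
          Summable.sum_le_tsum _ (fun i _ => sq_nonneg _) (L2_sq_summable x)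
  have himg : TotallyBounded (Φ '' s) := by
    have hb : Bornology.IsBounded (Φ '' s) := by
      refine isBounded_iff_forall_norm_le.2 ⟨(Real.sqrt (f 0))⁻¹ * M, ?_⟩
      rintro y ⟨x, hxs, rfl⟩
      calc ‖Φ x‖ ≤ ‖x‖ := hΦnorm x
        _ ≤ (Real.sqrt (f 0))⁻¹ * wNorm f x := norm_le_wNorm hA x (hs x hxs)
        _ ≤ (Real.sqrt (f 0))⁻¹ * M := by
            apply mul_le_mul_of_nonneg_left (hM x hxs) (by positivity)
    exact hb.isCompact_closure.totallyBounded.subset subset_closure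
  obtain ⟨t, hts, htfin, htcover⟩ := totallyBounded_iff_subset.1 himg
    { p | dist p.1 p.2 < ε / 2 } (Metric.dist_mem_uniformity (by positivity))
  have hchoice : ∀ y ∈ t, ∃ z, z ∈ s ∧ Φ z = y := fun y hy => hts hy
  choose! g hgs hgΦ using hchoice
  refine ⟨g '' t, htfin.image g, fun x hx => ?_⟩
  have hxt := htcover (Set.mem_image_of_mem Φ hx)
  simp only [Set.mem_iUnion, Set.mem_setOf_eq] at hxt
  obtain ⟨y, hyt, hdy⟩ := hxt
  refine Set.mem_biUnion (Set.mem_image_of_mem g hyt) ?_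
  set z := g y with hz
  have hzs : z ∈ s := hgs y hyt
  have hdΦ : dist (Φ x) (Φ z) < ε / 2 := by rw [hgΦ y hyt]; exact hdy
  rw [Metric.mem_ball, dist_eq_norm, L2_norm_eq]
  have hsub : ∀ n, ((x - z : L2) : ℕ → ℝ) n = (x : ℕ → ℝ) n - (z : ℕ → ℝ) n := by
    intro n; simp [lp.coeFn_sub]
  have husum : Summable fun n => ((x : ℕ → ℝ) n - (z : ℕ → ℝ) n) ^ 2 := by
    have := L2_sq_summable (x - z)
    simpa only [hsub] using this
  have htailsum : ∀ w : L2, Summable fun n => (w : ℕ → ℝ) (n + N) ^ 2 :=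
    fun w => (summable_nat_add_iff N).2 (L2_sq_summable w)
  have hsplit := Summable.sum_add_tsum_nat_add
    (f := fun n => ((x : ℕ → ℝ) n - (z : ℕ → ℝ) n) ^ 2) N husum
  have htail_est : ∑' n, ((x : ℕ → ℝ) (n + N) - (z : ℕ → ℝ) (n + N)) ^ 2
      ≤ 4 * (M ^ 2 / f N) := by
    have hle : ∀ n, ((x : ℕ → ℝ) (n + N) - (z : ℕ → ℝ) (n + N)) ^ 2
        ≤ 2 * (x : ℕ → ℝ) (n + N) ^ 2 + 2 * (z : ℕ → ℝ) (n + N) ^ 2 := by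
      intro n; nlinarith [sq_nonneg ((x : ℕ → ℝ) (n + N) + (z : ℕ → ℝ) (n + N))]
    calc ∑' n, ((x : ℕ → ℝ) (n + N) - (z : ℕ → ℝ) (n + N)) ^ 2
        ≤ ∑' n, (2 * (x : ℕ → ℝ) (n + N) ^ 2 + 2 * (z : ℕ → ℝ) (n + N) ^ 2) := by
          refine Summable.tsum_le_tsum hle ((summable_nat_add_iff N).2 husum) ?_
          exact (((htailsum x).mul_left 2).add ((htailsum z).mul_left 2))
      _ = 2 * ∑' n, (x : ℕ → ℝ) (n + N) ^ 2 + 2 * ∑' n, (z : ℕ → ℝ) (n + N) ^ 2 := by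
          rw [Summable.tsum_add ((htailsum x).mul_left 2) ((htailsum z).mul_left 2),
            tsum_mul_left, tsum_mul_left]
      _ ≤ 2 * (M ^ 2 / f N) + 2 * (M ^ 2 / f N) := by
          have h1 := htail x hx
          have h2 := htail z hzs
          nlinarith
      _ = 4 * (M ^ 2 / f N) := by ring
  have hhead : ∑ i ∈ Finset.range N, ((x : ℕ → ℝ) i - (z : ℕ → ℝ) i) ^ 2 < (ε / 2) ^ 2 := by
    rw [hΦhead x z]
    have h0 : 0 ≤ dist (Φ x) (Φ z) := dist_nonneg
    nlinarith
  have htotal : ∑' n, ((x - z : L2) : ℕ → ℝ) n ^ 2 < ε ^ 2 := by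
    have heq : ∑' n, ((x - z : L2) : ℕ → ℝ) n ^ 2
        = ∑' n, ((x : ℕ → ℝ) n - (z : ℕ → ℝ) n) ^ 2 := by
      exact tsum_congr fun n => by rw [hsub]
    rw [heq, ← hsplit]
    have : (summable_nat_add_iff N).2 husum = (summable_nat_add_iff N).2 husum := rfl
    nlinarith [htail_est, hhead, hMN]
  have hfin : Real.sqrt (∑' n, ((x - z : L2) : ℕ → ℝ) n ^ 2) < ε :=
    (Real.sqrt_lt' hε).2 htotal
  exact hfin
end
end

section
/- Let f₁ and f₂ be admissible functions. Then there exists a scale isomorphism between the pairs (ℓ², ℓ²_{f₁}) and (ℓ², ℓ²_{f₂}) if and only if f₁ ∼ f₂. -/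
noncomputable section

/-! ### Auxiliary material -/

theorem le_mul_of_one_div_mul_le {a b c : ℝ} (hc : 0 < c) (h : (1 / c) * a ≤ b) :
    a ≤ c * b := by
  rw [one_div, inv_mul_le_iff₀ hc] at h
  exact h

theorem one_div_mul_le_of_le_mul {a b c : ℝ} (hc : 0 < c) (h : a ≤ c * b) :
    (1 / c) * a ≤ b := by
  rw [one_div, inv_mul_le_iff₀ hc]
  exact h

/-- Coordinate evaluation as a linear map on `ℓ²`. -/
def coordMap (k : ℕ) : L2 →ₗ[ℝ] ℝ where
  toFun x := x k
  map_add' x y := congrFun (lp.coeFn_add x y) k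
  map_smul' c x := congrFun (lp.coeFn_smul c x) k

theorem norm_sq_eq (x : L2) : ‖x‖ ^ 2 = ∑' i, x i ^ 2 := by
  rw [← real_inner_self_eq_norm_sq, lp.inner_eq_tsum]
  simp [RCLike.inner_apply, sq]

theorem sq_summable (x : L2) : Summable fun i => x i ^ 2 := by
  have := lp.summable_inner (𝕜 := ℝ) x x
  simpa [RCLike.inner_apply, sq] using this

theorem exists_ker (n : ℕ) (g : (Fin (n+1) → ℝ) →ₗ[ℝ] (Fin n → ℝ)) : ∃ v ≠ 0, g v = 0 := by
  by_contra h
  push_neg at h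
  have hinj : Function.Injective g := by
    rw [injective_iff_map_eq_zero]
    intro a ha
    by_contra hne
    exact (h a hne) ha
  have := LinearMap.finrank_le_finrank_of_injective hinj
  simp [Module.finrank_pi] at this

/-- `MemW` transfers along a pointwise domination of weights. -/
theorem memW_of_le {f₁ f₂ : ℕ → ℝ} {c : ℝ} (hpos : ∀ n, 0 ≤ f₂ n)
    (hle : ∀ n, f₂ n ≤ c * f₁ n) {x : ℕ → ℝ} (hx : MemW f₁ x) : MemW f₂ x := by
  refine Summable.of_nonneg_of_le (fun n => mul_nonneg (hpos n) (sq_nonneg _))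
    (fun n => ?_) (hx.mul_left c)
  calc f₂ n * x n ^ 2 ≤ (c * f₁ n) * x n ^ 2 :=
        mul_le_mul_of_nonneg_right (hle n) (by positivity)
    _ = c * (f₁ n * x n ^ 2) := by ring

theorem wNorm_le_of_le {f₁ f₂ : ℕ → ℝ} {c : ℝ} (hc : 0 ≤ c) (hpos : ∀ n, 0 ≤ f₂ n)
    (hle : ∀ n, f₂ n ≤ c * f₁ n) {x : ℕ → ℝ} (hx : MemW f₁ x) :
    wNorm f₂ x ≤ Real.sqrt c * wNorm f₁ x := by
  have h2 : MemW f₂ x := memW_of_le hpos hle hx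
  have ht : (∑' n, f₂ n * x n ^ 2) ≤ c * ∑' n, f₁ n * x n ^ 2 := by
    rw [← tsum_mul_left]
    refine Summable.tsum_le_tsum (fun n => ?_) h2 (hx.mul_left c)
    calc f₂ n * x n ^ 2 ≤ (c * f₁ n) * x n ^ 2 :=
          mul_le_mul_of_nonneg_right (hle n) (by positivity)
      _ = c * (f₁ n * x n ^ 2) := by ring
  calc wNorm f₂ x ≤ Real.sqrt (c * ∑' n, f₁ n * x n ^ 2) := Real.sqrt_le_sqrt ht
    _ = Real.sqrt c * wNorm f₁ x := Real.sqrt_mul hc _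

/-- The finite test map sending `v` to `∑ v i • e i`. -/
def testMap (n : ℕ) : (Fin (n+1) → ℝ) →ₗ[ℝ] L2 where
  toFun v := ∑ i : Fin (n+1), v i • lp.single 2 (i : ℕ) (1 : ℝ)
  map_add' a b := by simp [add_smul, Finset.sum_add_distrib]
  map_smul' c a := by simp [Finset.smul_sum, smul_smul]

set_option maxHeartbeats 1000000 in
/-- The key quantitative lemma for the forward direction: a one-sided scale
isomorphism estimate forces a pointwise domination of the weights, via a
dimension-counting argument on the span of the first `n+1` basis vectors. -/
theorem key (f₁ f₂ : ℕ → ℝ) (h₁pos : ∀ n, 0 ≤ f₁ n) (h₁mono : Monotone f₁)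
    (h₂pos : ∀ n, 0 ≤ f₂ n) (h₂mono : Monotone f₂)
    (Φ : L2 →ₗ[ℝ] L2)
    (hmaps : ∀ x : L2, MemW f₁ x → MemW f₂ (Φ x))
    {c₀ : ℝ} (hc₀ : 0 < c₀) (hlow : ∀ x : L2, ‖x‖ ≤ c₀ * ‖Φ x‖)
    {cw : ℝ} (hcw : 0 < cw) (hup : ∀ x : L2, MemW f₁ x → wNorm f₂ (Φ x) ≤ cw * wNorm f₁ x) :
    ∀ n, f₂ n ≤ (c₀ * cw) ^ 2 * f₁ n := by
  intro n
  -- the test map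
  set T := testMap n with hT
  set g : (Fin (n+1) → ℝ) →ₗ[ℝ] (Fin n → ℝ) :=
    LinearMap.pi (fun i : Fin n => (coordMap (i : ℕ)).comp (Φ.comp T)) with hg
  obtain ⟨v, hv, hgv⟩ := exists_ker n g
  set x : L2 := T v with hxdef
  have hx : ∀ k, (x : ℕ → ℝ) k = ∑ i : Fin (n+1), v i * (if k = (i : ℕ) then (1:ℝ) else 0) := by
    intro k
    show coordMap k (T v) = _
    rw [hT, show (testMap n) v = ∑ i : Fin (n+1), v i • lp.single 2 (i : ℕ) (1 : ℝ) from rfl]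
    rw [map_sum]
    refine Finset.sum_congr rfl fun i _ => ?_
    rw [map_smul]
    show v i * (lp.single 2 (i : ℕ) (1:ℝ) : ℕ → ℝ) k = _
    congr 1
    by_cases hk : k = (i : ℕ)
    · subst hk; simp [lp.single_apply_self]
    · rw [lp.single_apply_ne _ _ _ hk]; simp [hk]
  have hxlt : ∀ (k : ℕ) (hk : k < n + 1), (x : ℕ → ℝ) k = v ⟨k, hk⟩ := by
    intro k hk
    rw [hx k, Finset.sum_eq_single (⟨k, hk⟩ : Fin (n+1))]
    · simp
    · intro b _ hb
      have : k ≠ (b : ℕ) := fun h => hb (by ext; simp [← h])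
      simp [this]
    · simp
  have hxge : ∀ k : ℕ, ¬ (k < n + 1) → (x : ℕ → ℝ) k = 0 := by
    intro k hk
    rw [hx k]
    refine Finset.sum_eq_zero fun i _ => ?_
    have : k ≠ (i : ℕ) := by omega
    simp [this]
  -- x ≠ 0
  have hxne : x ≠ 0 := by
    obtain ⟨i, hi⟩ := Function.ne_iff.1 hv
    intro h0
    apply hi
    have := hxlt (i : ℕ) i.isLt
    simp only [h0] at this
    rw [show ((0 : L2) : ℕ → ℝ) (i:ℕ) = 0 from rfl] at this
    simpa using this.symm
  have hxnorm : 0 < ‖x‖ := by simpa [norm_pos_iff] using hxne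
  -- x ∈ ℓ²_{f₁}
  have hmem1 : MemW f₁ x := by
    refine summable_of_ne_finset_zero (s := Finset.range (n+1)) fun k hk => ?_
    rw [Finset.mem_range] at hk
    rw [hxge k hk]
    ring
  -- wNorm f₁ x ≤ √(f₁ n) ‖x‖
  have hxw : wNorm f₁ x ≤ Real.sqrt (f₁ n) * ‖x‖ := by
    have h1 : (∑' k, f₁ k * (x : ℕ → ℝ) k ^ 2) = ∑ k ∈ Finset.range (n+1), f₁ k * (x : ℕ → ℝ) k ^ 2 := by
      refine tsum_eq_sum fun k hk => ?_
      rw [Finset.mem_range] at hk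
      rw [hxge k hk]; ring
    have h2 : (∑ k ∈ Finset.range (n+1), f₁ k * (x : ℕ → ℝ) k ^ 2)
        ≤ f₁ n * ∑ k ∈ Finset.range (n+1), (x : ℕ → ℝ) k ^ 2 := by
      rw [Finset.mul_sum]
      refine Finset.sum_le_sum fun k hk => ?_
      rw [Finset.mem_range] at hk
      exact mul_le_mul_of_nonneg_right (h₁mono (by omega)) (sq_nonneg _)
    have h3 : (∑ k ∈ Finset.range (n+1), (x : ℕ → ℝ) k ^ 2) ≤ ∑' k, (x : ℕ → ℝ) k ^ 2 :=
      Summable.sum_le_tsum _ (fun k _ => sq_nonneg _) (sq_summable x)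
    have h4 : (∑' k, f₁ k * (x : ℕ → ℝ) k ^ 2) ≤ f₁ n * ‖x‖ ^ 2 := by
      rw [norm_sq_eq]
      calc _ = ∑ k ∈ Finset.range (n+1), f₁ k * (x : ℕ → ℝ) k ^ 2 := h1
        _ ≤ f₁ n * ∑ k ∈ Finset.range (n+1), (x : ℕ → ℝ) k ^ 2 := h2
        _ ≤ f₁ n * ∑' k, (x : ℕ → ℝ) k ^ 2 := mul_le_mul_of_nonneg_left h3 (h₁pos n)
    calc wNorm f₁ x ≤ Real.sqrt (f₁ n * ‖x‖ ^ 2) := Real.sqrt_le_sqrt h4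
      _ = Real.sqrt (f₁ n) * ‖x‖ := by
        rw [Real.sqrt_mul (h₁pos n), Real.sqrt_sq (norm_nonneg _)]
  -- the image y and its properties
  set y : L2 := Φ x with hydef
  have hy0 : ∀ k : ℕ, k < n → (y : ℕ → ℝ) k = 0 := by
    intro k hk
    have := congrFun hgv ⟨k, hk⟩
    simpa [hg, coordMap] using this
  have hmem2 : MemW f₂ y := hmaps x hmem1
  have hyw : Real.sqrt (f₂ n) * ‖y‖ ≤ wNorm f₂ y := by
    have h1 : f₂ n * ‖y‖ ^ 2 ≤ ∑' k, f₂ k * (y : ℕ → ℝ) k ^ 2 := by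
      rw [norm_sq_eq, ← tsum_mul_left]
      refine Summable.tsum_le_tsum (fun k => ?_) ((sq_summable y).mul_left _) hmem2
      by_cases hk : k < n
      · rw [hy0 k hk]; simp
      · exact mul_le_mul_of_nonneg_right (h₂mono (by omega)) (sq_nonneg _)
    calc Real.sqrt (f₂ n) * ‖y‖ = Real.sqrt (f₂ n * ‖y‖ ^ 2) := by
          rw [Real.sqrt_mul (h₂pos n), Real.sqrt_sq (norm_nonneg _)]
      _ ≤ wNorm f₂ y := Real.sqrt_le_sqrt h1
  -- chain of estimates
  have hchain : Real.sqrt (f₂ n) * ‖x‖ ≤ (c₀ * cw * Real.sqrt (f₁ n)) * ‖x‖ := by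
    have s2 : (0:ℝ) ≤ Real.sqrt (f₂ n) := Real.sqrt_nonneg _
    calc Real.sqrt (f₂ n) * ‖x‖ ≤ Real.sqrt (f₂ n) * (c₀ * ‖y‖) :=
          mul_le_mul_of_nonneg_left (hlow x) s2
      _ = c₀ * (Real.sqrt (f₂ n) * ‖y‖) := by ring
      _ ≤ c₀ * wNorm f₂ y := mul_le_mul_of_nonneg_left hyw hc₀.le
      _ ≤ c₀ * (cw * wNorm f₁ x) := mul_le_mul_of_nonneg_left (hup x hmem1) hc₀.le
      _ ≤ c₀ * (cw * (Real.sqrt (f₁ n) * ‖x‖)) :=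
          mul_le_mul_of_nonneg_left (mul_le_mul_of_nonneg_left hxw hcw.le) hc₀.le
      _ = (c₀ * cw * Real.sqrt (f₁ n)) * ‖x‖ := by ring
  have hsq : Real.sqrt (f₂ n) ≤ c₀ * cw * Real.sqrt (f₁ n) :=
    le_of_mul_le_mul_right hchain hxnorm
  have e1 : Real.sqrt (f₂ n) ^ 2 = f₂ n := Real.sq_sqrt (h₂pos n)
  have e2 : Real.sqrt (f₁ n) ^ 2 = f₁ n := Real.sq_sqrt (h₁pos n)
  nlinarith [Real.sqrt_nonneg (f₂ n), Real.sqrt_nonneg (f₁ n), mul_pos hc₀ hcw]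

/-- The scale Hilbert pairs `(ℓ², ℓ²_{f₁})` and `(ℓ², ℓ²_{f₂})` are scale
isomorphic if and only if `f₁ ∼ f₂`. A scale isomorphism is a bijective
linear map `Φ : ℓ² → ℓ²` restricting to a bijection `ℓ²_{f₁} → ℓ²_{f₂}`,
with two-sided norm bounds on both levels. -/
theorem scale_iso_iff_equiv (f₁ f₂ : ℕ → ℝ) (h₁ : Admissible f₁) (h₂ : Admissible f₂) :
    (∃ Φ : L2 →ₗ[ℝ] L2, Function.Bijective Φ ∧
      Set.BijOn Φ {x : L2 | MemW f₁ x} {x : L2 | MemW f₂ x} ∧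
      (∃ c : ℝ, 0 < c ∧ ∀ x : L2, (1 / c) * ‖x‖ ≤ ‖Φ x‖ ∧ ‖Φ x‖ ≤ c * ‖x‖) ∧
      (∃ c : ℝ, 0 < c ∧ ∀ x : L2, MemW f₁ x →
        (1 / c) * wNorm f₁ x ≤ wNorm f₂ (Φ x) ∧ wNorm f₂ (Φ x) ≤ c * wNorm f₁ x)) ↔
    FEquiv f₁ f₂ := by
  obtain ⟨h₁pos, h₁mono, -⟩ := h₁
  obtain ⟨h₂pos, h₂mono, -⟩ := h₂
  constructor
  · rintro ⟨Φ, hbij, hBijOn, ⟨c₀, hc₀, hn⟩, ⟨cw, hcw, hw⟩⟩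
    set e := LinearEquiv.ofBijective Φ hbij with he
    set Ψ : L2 →ₗ[ℝ] L2 := (e.symm : L2 ≃ₗ[ℝ] L2).toLinearMap with hΨ
    have hΦΨ : ∀ y : L2, Φ (Ψ y) = y := fun y => e.apply_symm_apply y
    have hΨΦ : ∀ x : L2, Ψ (Φ x) = x := fun x => e.symm_apply_apply x
    -- data for Φ
    have hmaps₁ : ∀ x : L2, MemW f₁ x → MemW f₂ (Φ x) := fun x hx => hBijOn.mapsTo hx
    have hlow₁ : ∀ x : L2, ‖x‖ ≤ c₀ * ‖Φ x‖ := fun x =>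
      le_mul_of_one_div_mul_le hc₀ (hn x).1
    have hup₁ : ∀ x : L2, MemW f₁ x → wNorm f₂ (Φ x) ≤ cw * wNorm f₁ x := fun x hx =>
      (hw x hx).2
    -- data for Ψ
    have hmapsΨ : ∀ y : L2, MemW f₂ y → MemW f₁ (Ψ y) := by
      intro y hy
      obtain ⟨x, hx, hΦx⟩ := hBijOn.surjOn hy
      have : Ψ y = x := by rw [← hΦx, hΨΦ]
      rw [this]
      exact hx
    have hlowΨ : ∀ y : L2, ‖y‖ ≤ c₀ * ‖Ψ y‖ := by
      intro y
      have := (hn (Ψ y)).2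
      rwa [hΦΨ] at this
    have hupΨ : ∀ y : L2, MemW f₂ y → wNorm f₁ (Ψ y) ≤ cw * wNorm f₂ y := by
      intro y hy
      have h := (hw (Ψ y) (hmapsΨ y hy)).1
      rw [hΦΨ] at h
      exact le_mul_of_one_div_mul_le hcw h
    have h21 := key f₁ f₂ (fun n => (h₁pos n).le) h₁mono (fun n => (h₂pos n).le) h₂mono
      Φ hmaps₁ hc₀ hlow₁ hcw hup₁
    have h12 := key f₂ f₁ (fun n => (h₂pos n).le) h₂mono (fun n => (h₁pos n).le) h₁mono
      Ψ hmapsΨ hc₀ hlowΨ hcw hupΨ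
    have hK : (0:ℝ) < (c₀ * cw) ^ 2 := by positivity
    exact ⟨(c₀ * cw) ^ 2, hK, fun n =>
      ⟨one_div_mul_le_of_le_mul hK (h12 n), h21 n⟩⟩
  · rintro ⟨c, hc, hcf⟩
    have hle21 : ∀ n, f₂ n ≤ c * f₁ n := fun n => (hcf n).2
    have hle12 : ∀ n, f₁ n ≤ c * f₂ n := fun n => le_mul_of_one_div_mul_le hc (hcf n).1
    have hseteq : {x : L2 | MemW f₁ x} = {x : L2 | MemW f₂ x} := by
      ext x
      exact ⟨fun hx => memW_of_le (fun n => (h₂pos n).le) hle21 hx,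
        fun hx => memW_of_le (fun n => (h₁pos n).le) hle12 hx⟩
    refine ⟨LinearMap.id, Function.bijective_id, ?_, ⟨1, one_pos, fun x => by simp⟩,
      ⟨Real.sqrt c, Real.sqrt_pos.2 hc, fun x hx => ?_⟩⟩
    · rw [LinearMap.id_coe, hseteq]
      exact Set.bijOn_id _
    · have hx2 : MemW f₂ x := memW_of_le (fun n => (h₂pos n).le) hle21 hx
      have hup : wNorm f₂ x ≤ Real.sqrt c * wNorm f₁ x :=
        wNorm_le_of_le hc.le (fun n => (h₂pos n).le) hle21 hx
      have hlo : wNorm f₁ x ≤ Real.sqrt c * wNorm f₂ x :=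
        wNorm_le_of_le hc.le (fun n => (h₁pos n).le) hle12 hx2
      exact ⟨one_div_mul_le_of_le_mul (Real.sqrt_pos.2 hc) hlo, hup⟩
end
end

section
/- Let H and W be real Hilbert spaces with H infinite-dimensional, and let ι : W → H be an injective compact continuous linear map with dense range. Then there exist an admissible function f : ℕ → ℝ and a surjective linear isometry Φ : H → ℓ² such that Φ ∘ ι maps W bijectively onto ℓ²_f and ‖Φ(ι w)‖_{ℓ²_f} = ‖w‖_W for all w ∈ W. -/
noncomputable section

section SpectralAux

open Submodule Set Filter Topology
open scoped ENNReal



open Submodule Set Filter Topology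

variable {E : Type*} [NormedAddCommGroup E] [InnerProductSpace ℝ E] [CompleteSpace E]

local notation "⟪" x ", " y "⟫" => @inner ℝ _ _ x y

lemma mem_orth_span {s : Set E} {x : E} :
    x ∈ (span ℝ s)ᗮ ↔ ∀ v ∈ s, ⟪v, x⟫ = 0 := by
  rw [Submodule.mem_orthogonal]
  constructor
  · exact fun h v hv => h v (subset_span hv)
  · intro h u hu
    have : span ℝ s ≤ LinearMap.ker (innerSL ℝ x : E →ₗ[ℝ] ℝ) := by
      rw [Submodule.span_le]
      intro v hv
      simp only [SetLike.mem_coe, LinearMap.mem_ker, ContinuousLinearMap.coe_coe, innerSL_apply_apply]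
      rw [real_inner_comm]; exact h v hv
    have := this hu
    simp only [LinearMap.mem_ker, ContinuousLinearMap.coe_coe, innerSL_apply_apply] at this
    rw [real_inner_comm]; exact this

/-- Generalized Cauchy-Schwarz for a positive symmetric operator. -/
lemma gcs (T : E →L[ℝ] E) (hsym : ∀ x y : E, ⟪T x, y⟫ = ⟪x, T y⟫)
    (hpos : ∀ x : E, 0 ≤ ⟪T x, x⟫) (x y : E) :
    ⟪T x, y⟫ ^ 2 ≤ ⟪T x, x⟫ * ⟪T y, y⟫ := by
  have key : ∀ t : ℝ, 0 ≤ ⟪T y, y⟫ * (t * t) + (2 * ⟪T x, y⟫) * t + ⟪T x, x⟫ := by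
    intro t
    have := hpos (x + t • y)
    have expand : ⟪T (x + t • y), x + t • y⟫ =
        ⟪T y, y⟫ * (t * t) + (2 * ⟪T x, y⟫) * t + ⟪T x, x⟫ := by
      rw [map_add, map_smul]
      rw [inner_add_left, inner_add_right, inner_add_right]
      rw [real_inner_smul_left, real_inner_smul_left, real_inner_smul_right]
      have h1 : ⟪T y, x⟫ = ⟪T x, y⟫ := by rw [hsym, real_inner_comm]
      rw [h1, real_inner_smul_right]; ring
    linarith [expand ▸ this]
  have hd := discrim_le_zero key
  rw [discrim] at hd
  nlinarith

/-- A compact operator sends bounded sequences to sequences with a convergent subsequence. -/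
lemma compact_subseq (T : E →L[ℝ] E) (hcpt : IsCompactOperator T)
    (u : ℕ → E) (hu : ∀ n, ‖u n‖ ≤ 1) :
    ∃ φ : ℕ → ℕ, StrictMono φ ∧ ∃ z : E, Tendsto (fun k => T (u (φ k))) atTop (𝓝 z) := by
  obtain ⟨K, hK, hmem⟩ := hcpt
  rw [Metric.mem_nhds_iff] at hmem
  obtain ⟨ε, hε, hball⟩ := hmem
  set c : ℝ := ε / 2 with hc
  have hcpos : 0 < c := by positivity
  have hmemK : ∀ n, T (c • u n) ∈ K := by
    intro n
    apply hball
    rw [Metric.mem_ball, dist_zero_right, norm_smul, Real.norm_eq_abs, abs_of_pos hcpos]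
    calc c * ‖u n‖ ≤ c * 1 := by nlinarith [hu n, norm_nonneg (u n)]
      _ < ε := by rw [mul_one, hc]; linarith
  obtain ⟨a, _, φ, hφ, ha⟩ := hK.tendsto_subseq hmemK
  refine ⟨φ, hφ, c⁻¹ • a, ?_⟩
  have : ∀ k, T (u (φ k)) = c⁻¹ • T (c • u (φ k)) := by
    intro k
    rw [map_smul, smul_smul, inv_mul_cancel₀ hcpos.ne', one_smul]
  simp_rw [this]
  exact ha.const_smul _

/-- Extraction of a top eigenvector of a compact positive symmetric injective operator
on the orthogonal complement of an invariant subspace. -/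
lemma exists_eig (T : E →L[ℝ] E) (hsym : ∀ x y : E, ⟪T x, y⟫ = ⟪x, T y⟫)
    (hpos : ∀ x : E, 0 ≤ ⟪T x, x⟫) (hcpt : IsCompactOperator T)
    (hinj : Function.Injective T)
    (V : Submodule ℝ E) (hinv : ∀ x ∈ Vᗮ, T x ∈ Vᗮ)
    (hne : ∃ x ∈ Vᗮ, x ≠ 0) :
    ∃ x ∈ Vᗮ, ‖x‖ = 1 ∧ ∃ μ : ℝ, 0 < μ ∧ T x = μ • x ∧
      ∀ y ∈ Vᗮ, ‖y‖ = 1 → ⟪T y, y⟫ ≤ μ := by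
  classical
  -- the set of Rayleigh values on the unit sphere of Vᗮ
  set S : Set ℝ := {r : ℝ | ∃ y ∈ Vᗮ, ‖y‖ = 1 ∧ ⟪T y, y⟫ = r} with hS
  have hTne : ∀ y : E, y ≠ 0 → 0 < ⟪T y, y⟫ := by
    intro y hy
    rcases lt_or_eq_of_le (hpos y) with h | h
    · exact h
    · exfalso
      have h2 := gcs T hsym hpos y (T y)
      rw [← h] at h2
      have : ⟪T y, T y⟫ = 0 := by nlinarith [real_inner_self_nonneg (x := T y)]
      have hTy : T y = 0 := by
        rwa [real_inner_self_eq_norm_sq, pow_eq_zero_iff (by norm_num), norm_eq_zero] at this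
      exact hy (hinj (by rw [hTy, map_zero]))
  obtain ⟨x₀, hx₀V, hx₀⟩ := hne
  set u₀ : E := ‖x₀‖⁻¹ • x₀ with hu₀
  have hx₀n : ‖x₀‖ ≠ 0 := norm_ne_zero_iff.mpr hx₀
  have hu₀V : u₀ ∈ Vᗮ := Submodule.smul_mem _ _ hx₀V
  have hu₀n : ‖u₀‖ = 1 := by
    rw [hu₀, norm_smul, norm_inv, norm_norm, inv_mul_cancel₀ hx₀n]
  have hu₀ne : u₀ ≠ 0 := by rw [← norm_ne_zero_iff, hu₀n]; norm_num
  have hSne : S.Nonempty := ⟨⟪T u₀, u₀⟫, u₀, hu₀V, hu₀n, rfl⟩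
  have hSbdd : BddAbove S := by
    refine ⟨‖T‖, ?_⟩
    rintro r ⟨y, _, hy1, rfl⟩
    calc ⟪T y, y⟫ ≤ ‖T y‖ * ‖y‖ := real_inner_le_norm _ _
      _ ≤ ‖T‖ * ‖y‖ * ‖y‖ := by
          have := T.le_opNorm y
          nlinarith [norm_nonneg (T y), norm_nonneg y, norm_nonneg (T : E →L[ℝ] E)]
      _ = ‖T‖ := by rw [hy1]; ring
  set m : ℝ := sSup S with hm
  have hmax : ∀ y ∈ Vᗮ, ‖y‖ = 1 → ⟪T y, y⟫ ≤ m := fun y hyV hy1 =>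
    le_csSup hSbdd ⟨y, hyV, hy1, rfl⟩
  have hmpos : 0 < m := lt_of_lt_of_le (hTne u₀ hu₀ne) (hmax u₀ hu₀V hu₀n)
  -- scaled bound
  have hbdd1 : ∀ y ∈ Vᗮ, ⟪T y, y⟫ ≤ m * ‖y‖ ^ 2 := by
    intro y hyV
    by_cases hy : y = 0
    · simp [hy]
    · have hyn : ‖y‖ ≠ 0 := norm_ne_zero_iff.mpr hy
      have := hmax (‖y‖⁻¹ • y) (Submodule.smul_mem _ _ hyV)
        (by rw [norm_smul, norm_inv, norm_norm, inv_mul_cancel₀ hyn])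
      rw [map_smul, real_inner_smul_left, real_inner_smul_right] at this
      have h2 : (0:ℝ) < ‖y‖ ^ 2 := by positivity
      calc ⟪T y, y⟫ = ‖y‖ ^ 2 * (‖y‖⁻¹ * (‖y‖⁻¹ * ⟪T y, y⟫)) := by
            field_simp
        _ ≤ ‖y‖ ^ 2 * m := by nlinarith
        _ = m * ‖y‖ ^ 2 := by ring
  have hbdd2 : ∀ y ∈ Vᗮ, ‖T y‖ ^ 2 ≤ m * ⟪T y, y⟫ := by
    intro y hyV
    by_cases hTy : T y = 0
    · rw [hTy]; simp [hpos y]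
    · have h1 := gcs T hsym hpos y (T y)
      have h2 := hbdd1 (T y) (hinv y hyV)
      have h3 : ⟪T y, T y⟫ = ‖T y‖ ^ 2 := real_inner_self_eq_norm_sq (T y)
      have h4 : (0:ℝ) < ‖T y‖ ^ 2 := pow_pos (norm_pos_iff.mpr hTy) 2
      nlinarith [hpos y]
  -- choose an approximating sequence
  have hseq : ∀ k : ℕ, ∃ y, y ∈ Vᗮ ∧ ‖y‖ = 1 ∧ m - 1 / (k + 1) < ⟪T y, y⟫ := by
    intro k
    have hlt : m - 1 / (k + 1) < m := by
      have : (0:ℝ) < 1 / (k + 1) := by positivity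
      linarith
    obtain ⟨r, hrS, hr⟩ := exists_lt_of_lt_csSup hSne hlt
    obtain ⟨y, hyV, hy1, rfl⟩ := hrS
    exact ⟨y, hyV, hy1, hr⟩
  choose u huV hu1 hulb using hseq
  -- the Rayleigh values tend to m
  have hray : Tendsto (fun k => ⟪T (u k), u k⟫) atTop (𝓝 m) := by
    have h1 : Tendsto (fun k : ℕ => m - 1 / (k + 1 : ℝ)) atTop (𝓝 m) := by
      have := tendsto_one_div_add_atTop_nhds_zero_nat (𝕜 := ℝ)
      have h2 := (tendsto_const_nhds (x := m) (f := atTop (α := ℕ))).sub this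
      simpa using h2
    refine tendsto_of_tendsto_of_tendsto_of_le_of_le h1 tendsto_const_nhds
      (fun k => le_of_lt (hulb k)) (fun k => hmax (u k) (huV k) (hu1 k))
  -- ‖T u_k - m u_k‖ → 0
  have hdiff : Tendsto (fun k => T (u k) - m • u k) atTop (𝓝 0) := by
    rw [tendsto_zero_iff_norm_tendsto_zero]
    have hsq : ∀ k, ‖T (u k) - m • u k‖ ^ 2 ≤ m ^ 2 - m * ⟪T (u k), u k⟫ := by
      intro k
      have he : ‖T (u k) - m • u k‖ ^ 2 =
          ‖T (u k)‖ ^ 2 - 2 * (m * ⟪T (u k), u k⟫) + m ^ 2 := by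
        rw [norm_sub_sq_real, real_inner_smul_right, norm_smul, Real.norm_eq_abs,
          mul_pow, sq_abs, hu1 k]
        ring
      have hb := hbdd2 (u k) (huV k)
      have hb1 : ⟪T (u k), u k⟫ ≤ m := by
        have := hbdd1 (u k) (huV k); rw [hu1 k] at this; simpa using this
      nlinarith
    have hlim : Tendsto (fun k => m ^ 2 - m * ⟪T (u k), u k⟫) atTop (𝓝 0) := by
      have := (tendsto_const_nhds (x := m ^ 2) (f := atTop (α := ℕ))).sub
        ((tendsto_const_nhds (x := m) (f := atTop (α := ℕ))).mul hray)
      simpa [sq] using this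
    have hsqlim : Tendsto (fun k => ‖T (u k) - m • u k‖ ^ 2) atTop (𝓝 0) :=
      tendsto_of_tendsto_of_tendsto_of_le_of_le tendsto_const_nhds hlim
        (fun k => by positivity) hsq
    have := hsqlim.sqrt
    simpa [Real.sqrt_sq (norm_nonneg _)] using this
  -- compactness: pass to a convergent subsequence
  obtain ⟨φ, hφ, z, hz⟩ := compact_subseq T hcpt u (fun n => le_of_eq (hu1 n))
  have hulim : Tendsto (fun k => u (φ k)) atTop (𝓝 (m⁻¹ • z)) := by
    have h1 : Tendsto (fun k => m • u (φ k)) atTop (𝓝 z) := by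
      have h2 : Tendsto (fun k => T (u (φ k)) - m • u (φ k)) atTop (𝓝 0) :=
        hdiff.comp hφ.tendsto_atTop
      have := hz.sub h2
      simpa using this
    have := h1.const_smul (m⁻¹)
    simpa [smul_smul, inv_mul_cancel₀ hmpos.ne'] using this
  set x : E := m⁻¹ • z with hx
  have hxV : x ∈ Vᗮ := by
    have hclosed : IsClosed (Vᗮ : Set E) := Submodule.isClosed_orthogonal V
    exact hclosed.mem_of_tendsto hulim (Eventually.of_forall fun k => huV (φ k))
  have hxn : ‖x‖ = 1 := by
    have := (continuous_norm.tendsto _).comp hulim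
    have h2 : Tendsto (fun k => ‖u (φ k)‖) atTop (𝓝 1) := by
      simpa [hu1] using tendsto_const_nhds (x := (1:ℝ)) (f := atTop (α := ℕ))
    exact tendsto_nhds_unique ((continuous_norm.tendsto _).comp hulim |>.congr
      (fun k => rfl)) h2 |>.symm ▸ rfl
  have hTx : T x = m • x := by
    have h1 : Tendsto (fun k => T (u (φ k))) atTop (𝓝 (T x)) :=
      (T.continuous.tendsto _).comp hulim
    have h2 : T x = z := tendsto_nhds_unique h1 hz
    rw [h2, hx, smul_smul, mul_inv_cancel₀ hmpos.ne', one_smul]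
  exact ⟨x, hxV, hxn, m, hmpos, hTx, hmax⟩


/-- The property of being a next eigenvector, orthogonal to `s`, with maximal Rayleigh value. -/
def Q (T : E →L[ℝ] E) (s : Set E) (x : E) : Prop :=
  x ∈ (span ℝ s)ᗮ ∧ ‖x‖ = 1 ∧ ∃ μ : ℝ, 0 < μ ∧ T x = μ • x ∧
    ∀ y ∈ (span ℝ s)ᗮ, ‖y‖ = 1 → ⟪T y, y⟫ ≤ μ

open scoped Classical in
noncomputable def pick (T : E →L[ℝ] E) (s : Set E) : E :=
  if h : ∃ x, Q T s x then h.choose else 0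

lemma pick_spec {T : E →L[ℝ] E} {s : Set E} (h : ∃ x, Q T s x) : Q T s (pick T s) := by
  classical
  rw [pick, dif_pos h]; exact h.choose_spec

noncomputable def eseq (T : E →L[ℝ] E) : ℕ → ℕ → E
  | 0 => fun _ => 0
  | (n+1) => Function.update (eseq T n) n (pick T (eseq T n '' Iio n))

noncomputable def evec (T : E →L[ℝ] E) (n : ℕ) : E := eseq T (n+1) n

lemma eseq_stable (T : E →L[ℝ] E) {k m n : ℕ} (hk : k < m) (hmn : m ≤ n) :
    eseq T n k = eseq T m k := by
  induction n with
  | zero => omega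
  | succ n ih =>
    rcases Nat.lt_or_ge n m with h | h
    · have : m = n + 1 := by omega
      subst this; rfl
    · have hkn : k ≠ n := by omega
      rw [eseq, Function.update_of_ne hkn]
      exact ih (by omega)

lemma evec_def (T : E →L[ℝ] E) (n : ℕ) : evec T n = pick T (evec T '' Iio n) := by
  have h1 : evec T n = pick T (eseq T n '' Iio n) := by
    rw [evec, eseq, Function.update_self]
  rw [h1]
  congr 1
  apply Set.image_congr
  intro k hk
  rw [Set.mem_Iio] at hk
  exact eseq_stable T (Nat.lt_succ_self k) (Nat.succ_le_of_lt hk)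

lemma evec_Q (T : E →L[ℝ] E) (hsym : ∀ x y : E, ⟪T x, y⟫ = ⟪x, T y⟫)
    (hpos : ∀ x : E, 0 ≤ ⟪T x, x⟫) (hcpt : IsCompactOperator T)
    (hinj : Function.Injective T) (hEinf : ¬ FiniteDimensional ℝ E) :
    ∀ n, Q T (evec T '' Iio n) (evec T n) := by
  intro n
  induction n using Nat.strong_induction_on with
  | _ n ih =>
    rw [evec_def]
    apply pick_spec
    set V : Submodule ℝ E := span ℝ (evec T '' Iio n) with hV
    have hinv : ∀ x ∈ Vᗮ, T x ∈ Vᗮ := by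
      intro x hx
      rw [hV, mem_orth_span]
      rintro v ⟨m, hm, rfl⟩
      rw [Set.mem_Iio] at hm
      obtain ⟨_, _, μ, _, hTe, _⟩ := ih m hm
      have hx0 : ⟪evec T m, x⟫ = 0 := by
        rw [hV, mem_orth_span] at hx
        exact hx _ ⟨m, Set.mem_Iio.mpr hm, rfl⟩
      rw [← hsym, hTe, real_inner_smul_left, hx0, mul_zero]
    have hne : ∃ x ∈ Vᗮ, x ≠ 0 := by
      by_contra hcon
      push_neg at hcon
      have hbot : Vᗮ = ⊥ := by
        rw [Submodule.eq_bot_iff]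
        exact fun x hx => hcon x hx
      have hfin : FiniteDimensional ℝ V := by
        apply FiniteDimensional.span_of_finite
        exact (Set.finite_Iio n).image _
      rw [Submodule.orthogonal_eq_bot_iff] at hbot
      rw [hbot] at hfin
      exact hEinf (Module.Finite.equiv (Submodule.topEquiv (R := ℝ) (M := E)))
    obtain ⟨x, hxV, hxn, μ, hμ, hTx, hmax⟩ :=
      exists_eig T hsym hpos hcpt hinj V hinv hne
    exact ⟨x, hxV, hxn, μ, hμ, hTx, hmax⟩

end SpectralAux

open Submodule Set Filter Topology
open scoped ENNReal

local notation "⟪" x ", " y "⟫" => @inner ℝ _ _ x y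

/-- If `H` is an infinite-dimensional real Hilbert space and `ι : W → H` is an
injective compact continuous linear map with dense range, then there are an
admissible `f` and a surjective linear isometry `Φ : H → ℓ²` such that `Φ ∘ ι`
maps `W` bijectively onto `ℓ²_f` and carries `‖·‖_W` to `‖·‖_{ℓ²_f}`. -/
theorem exists_scale_isometry_to_weighted {H W : Type*}
    [NormedAddCommGroup H] [InnerProductSpace ℝ H] [CompleteSpace H]
    [NormedAddCommGroup W] [InnerProductSpace ℝ W] [CompleteSpace W]
    (hinf : ¬ FiniteDimensional ℝ H)
    (ι : W →L[ℝ] H) (hinj : Function.Injective ι) (hcpt : IsCompactOperator ι)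
    (hdense : DenseRange ι) :
    ∃ f : ℕ → ℝ, Admissible f ∧ ∃ Φ : H ≃ₗᵢ[ℝ] L2,
      Set.BijOn (fun w => Φ (ι w)) Set.univ {x : L2 | MemW f x} ∧
      ∀ w : W, wNorm f (Φ (ι w)) = ‖w‖ := by
  classical
  set T : W →L[ℝ] W := (ContinuousLinearMap.adjoint ι).comp ι with hT
  have hTapp : ∀ w w' : W, ⟪T w, w'⟫ = ⟪ι w, ι w'⟫ := by
    intro w w'
    rw [hT, ContinuousLinearMap.comp_apply, ContinuousLinearMap.adjoint_inner_left]
  have hsym : ∀ x y : W, ⟪T x, y⟫ = ⟪x, T y⟫ := by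
    intro x y
    rw [hTapp, real_inner_comm, ← hTapp, real_inner_comm]
  have hpos : ∀ x : W, 0 ≤ ⟪T x, x⟫ := by
    intro x; rw [hTapp]; exact real_inner_self_nonneg
  have hTinj : Function.Injective T := by
    intro a b hab
    apply hinj
    have h0 : T (a - b) = 0 := by rw [map_sub, hab, sub_self]
    have : ⟪ι (a - b), ι (a - b)⟫ = 0 := by rw [← hTapp, h0, inner_zero_left]
    have := inner_self_eq_zero.mp this
    rw [← sub_eq_zero, ← map_sub]; exact this
  have hTcpt : IsCompactOperator T := by
    have := hcpt.clm_comp (ContinuousLinearMap.adjoint ι)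
    rwa [hT]
  have hWinf : ¬ FiniteDimensional ℝ W := by
    intro hW
    apply hinf
    have hfr : FiniteDimensional ℝ (LinearMap.range (ι : W →ₗ[ℝ] H)) :=
      Module.Finite.range (ι : W →ₗ[ℝ] H)
    have hclosed : IsClosed ((LinearMap.range (ι : W →ₗ[ℝ] H)) : Set H) :=
      Submodule.closed_of_finiteDimensional _
    have htop : LinearMap.range (ι : W →ₗ[ℝ] H) = ⊤ := by
      have h1 : closure (Set.range ⇑ι) = Set.univ := hdense.closure_range
      have h2 : (LinearMap.range (ι : W →ₗ[ℝ] H) : Set H) = Set.range ⇑ι := by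
        simp [LinearMap.coe_range]
      rw [Submodule.eq_top_iff']
      intro x
      have : x ∈ closure (Set.range ⇑ι) := by rw [h1]; trivial
      rw [← h2, hclosed.closure_eq] at this
      exact this
    rw [htop] at hfr
    exact Module.Finite.equiv (Submodule.topEquiv (R := ℝ) (M := H))
  -- the eigenvector sequence
  have hQ := evec_Q T hsym hpos hTcpt hTinj hWinf
  set e : ℕ → W := evec T with he
  have heV : ∀ n, e n ∈ (span ℝ (e '' Iio n))ᗮ := fun n => (hQ n).1
  have hen : ∀ n, ‖e n‖ = 1 := fun n => (hQ n).2.1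
  have hQ' : ∀ n, ∃ μ : ℝ, 0 < μ ∧ T (e n) = μ • e n ∧
      ∀ y ∈ (span ℝ (e '' Iio n))ᗮ, ‖y‖ = 1 → ⟪T y, y⟫ ≤ μ := fun n => (hQ n).2.2
  choose μ hμpos hTe hμmax using hQ'
  -- orthonormality of e
  have horth : ∀ {i j : ℕ}, i < j → ⟪e i, e j⟫ = 0 := by
    intro i j hij
    have := heV j
    rw [mem_orth_span] at this
    exact this (e i) ⟨i, Set.mem_Iio.mpr hij, rfl⟩
  have honW : Orthonormal ℝ e := by
    rw [orthonormal_iff_ite]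
    intro i j
    rcases lt_trichotomy i j with h | h | h
    · rw [horth h, if_neg (Nat.ne_of_lt h)]
    · subst h
      rw [if_pos rfl, real_inner_self_eq_norm_sq, hen i, one_pow]
    · rw [real_inner_comm, horth h, if_neg (Nat.ne_of_lt' h)]
  -- inner products of images
  have hiota : ∀ i j : ℕ, ⟪ι (e i), ι (e j)⟫ = if i = j then μ i else 0 := by
    intro i j
    rw [← hTapp, hTe, real_inner_smul_left]
    have := orthonormal_iff_ite.mp honW i j
    rw [this]
    by_cases h : i = j <;> simp [h]
  -- eigenvalues are antitone
  have hμanti : Antitone μ := by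
    apply antitone_nat_of_succ_le
    intro n
    have hmem : e (n + 1) ∈ (span ℝ (e '' Iio n))ᗮ := by
      apply Submodule.orthogonal_le _ (heV (n + 1))
      exact Submodule.span_mono (Set.image_mono (fun x hx => lt_trans hx (Nat.lt_succ_self n)))
    have := hμmax n (e (n + 1)) hmem (hen (n + 1))
    rw [hTe, real_inner_smul_left, real_inner_self_eq_norm_sq, hen, one_pow, mul_one] at this
    exact this
  -- no uniform positive lower bound on eigenvalues
  have hnb : ∀ c : ℝ, 0 < c → ¬ (∀ n, c ≤ μ n) := by
    intro c hc hall
    obtain ⟨φ, hφ, z, hz⟩ := compact_subseq T hTcpt e (fun n => le_of_eq (hen n))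
    have hcauchy := hz.cauchySeq
    rw [Metric.cauchySeq_iff] at hcauchy
    obtain ⟨N, hN⟩ := hcauchy c hc
    have h2 := hN (N + 1) (by omega) N (by omega)
    have hne : φ (N + 1) ≠ φ N := Nat.ne_of_gt (hφ (Nat.lt_succ_self N))
    set i := φ (N + 1); set j := φ N
    have hdist : dist (T (e i)) (T (e j)) ^ 2 = μ i ^ 2 + μ j ^ 2 := by
      rw [dist_eq_norm, hTe, hTe, norm_sub_sq_real, real_inner_smul_left,
        real_inner_smul_right, norm_smul, norm_smul]
      have h0 := orthonormal_iff_ite.mp honW i j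
      rw [if_neg hne] at h0
      rw [h0, Real.norm_eq_abs, Real.norm_eq_abs, abs_of_pos (hμpos i),
        abs_of_pos (hμpos j), hen, hen]
      ring
    have hge : c ^ 2 + c ^ 2 ≤ dist (T (e i)) (T (e j)) ^ 2 := by
      rw [hdist]
      have h3 := hall i; have h4 := hall j
      nlinarith
    nlinarith [dist_nonneg (x := T (e i)) (y := T (e j)), h2]
  -- μ tends to 0
  have hμ0 : Tendsto μ atTop (𝓝 0) := by
    have hbdd : BddBelow (Set.range μ) := ⟨0, by rintro r ⟨n, rfl⟩; exact (hμpos n).le⟩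
    have htend := tendsto_atTop_ciInf hμanti hbdd
    have hinf0 : ⨅ n, μ n = 0 := by
      rcases lt_trichotomy (⨅ n, μ n) 0 with h | h | h
      · exact absurd (le_ciInf fun n => (hμpos n).le) (not_le.mpr h)
      · exact h
      · exfalso
        exact hnb _ h (fun n => ciInf_le hbdd n)
    rwa [hinf0] at htend
  -- density of the eigenvectors in W
  have hspW : ⊤ ≤ (span ℝ (Set.range e)).topologicalClosure := by
    rw [top_le_iff, Submodule.topologicalClosure_eq_top_iff]
    by_contra hne0
    obtain ⟨x, hxV, hx0⟩ := Submodule.exists_mem_ne_zero_of_ne_bot hne0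
    have hinv : ∀ y ∈ (span ℝ (Set.range e))ᗮ, T y ∈ (span ℝ (Set.range e))ᗮ := by
      intro y hy
      rw [mem_orth_span]
      rintro v ⟨n, rfl⟩
      have hy0 : ⟪e n, y⟫ = 0 := by
        rw [mem_orth_span] at hy
        exact hy _ ⟨n, rfl⟩
      rw [← hsym, hTe, real_inner_smul_left, hy0, mul_zero]
    obtain ⟨y, hyV, hyn, ν, hν, hTy, _⟩ :=
      exists_eig T hsym hpos hTcpt hTinj (span ℝ (Set.range e)) hinv ⟨x, hxV, hx0⟩
    apply hnb ν hν
    intro n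
    have hmem : y ∈ (span ℝ (e '' Iio n))ᗮ :=
      Submodule.orthogonal_le (Submodule.span_mono (Set.image_subset_range e (Iio n))) hyV
    have := hμmax n y hmem hyn
    rw [hTy, real_inner_smul_left, real_inner_self_eq_norm_sq, hyn, one_pow, mul_one] at this
    exact this
  set b : HilbertBasis ℕ ℝ W := HilbertBasis.mk honW hspW with hb
  have hbe : ⇑b = e := HilbertBasis.coe_mk _ _
  -- the singular values
  set s : ℕ → ℝ := fun n => Real.sqrt (μ n) with hs
  have hspos : ∀ n, 0 < s n := fun n => Real.sqrt_pos.mpr (hμpos n)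
  have hssq : ∀ n, s n ^ 2 = μ n := fun n => Real.sq_sqrt (hμpos n).le
  -- the orthonormal family in H
  set h : ℕ → H := fun n => (s n)⁻¹ • ι (e n) with hh
  have honH : Orthonormal ℝ h := by
    rw [orthonormal_iff_ite]
    intro i j
    rw [hh]
    simp only
    rw [real_inner_smul_left, real_inner_smul_right, hiota]
    by_cases hij : i = j
    · subst hij
      rw [if_pos rfl, if_pos rfl, ← hssq i, pow_two]
      have hne := (hspos i).ne'
      field_simp
    · rw [if_neg hij, if_neg hij, mul_zero, mul_zero]
  -- density of span of h in H
  have hspH : ⊤ ≤ (span ℝ (Set.range h)).topologicalClosure := by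
    intro x _
    set C : Submodule ℝ H := (span ℝ (Set.range h)).topologicalClosure with hC
    have hCclosed : IsClosed (C : Set H) := Submodule.isClosed_topologicalClosure _
    have hrange : Set.range ⇑ι ⊆ (C : Set H) := by
      rintro _ ⟨w, rfl⟩
      have hsum : HasSum (fun i => b.repr w i • ι (e i)) (ι w) := by
        have h1 := (b.hasSum_repr w).mapL ι
        have h2 : (fun i => ι (b.repr w i • b i)) = fun i => b.repr w i • ι (e i) := by
          funext i
          rw [map_smul]
          congr 1
          exact congrArg ι (congrFun hbe i)
        rwa [h2] at h1
      refine mem_closure_of_tendsto hsum (Eventually.of_forall ?_)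
      intro t
      simp only [SetLike.mem_coe]
      apply Submodule.sum_mem
      rintro i -
      apply Submodule.smul_mem
      have hmem : ι (e i) ∈ span ℝ (Set.range h) := by
        have heq : ι (e i) = s i • h i := by
          rw [hh]; simp only
          rw [smul_smul, mul_inv_cancel₀ (hspos i).ne', one_smul]
        rw [heq]
        exact Submodule.smul_mem _ _ (subset_span ⟨i, rfl⟩)
      exact hmem
    have : closure (Set.range ⇑ι) ⊆ (C : Set H) :=
      closure_minimal hrange hCclosed
    exact this (hdense x)
  set c : HilbertBasis ℕ ℝ H := HilbertBasis.mk honH hspH with hc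
  have hch : ⇑c = h := HilbertBasis.coe_mk _ _
  -- representations
  have hbrepr : ∀ (w : W) (n : ℕ), b.repr w n = ⟪e n, w⟫ := by
    intro w n
    rw [b.repr_apply_apply]
    exact congrArg (fun v => (inner ℝ v w : ℝ)) (congrFun hbe n)
  have hkey : ∀ (w : W) (n : ℕ), (c.repr (ι w)) n = s n * ⟪e n, w⟫ := by
    intro w n
    rw [c.repr_apply_apply]
    have hstep : (⟪c n, ι w⟫ : ℝ) = ⟪h n, ι w⟫ :=
      congrArg (fun v => (inner ℝ v (ι w) : ℝ)) (congrFun hch n)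
    rw [hstep, hh]
    simp only
    rw [real_inner_smul_left, ← hTapp, hTe, real_inner_smul_left]
    have : (s n)⁻¹ * (μ n * ⟪e n, w⟫) = s n * ⟪e n, w⟫ := by
      rw [← hssq n, pow_two]
      have hsn := (hspos n).ne'
      field_simp
    exact this
  -- the weight function
  refine ⟨fun n => (μ n)⁻¹, ⟨fun n => inv_pos.mpr (hμpos n), ?_, ?_⟩, c.repr, ?_, ?_⟩
  · -- monotone
    intro i j hij
    exact inv_anti₀ (hμpos j) (hμanti hij)
  · -- unbounded
    intro hbdd
    obtain ⟨M, hM⟩ := hbdd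
    have htop : Tendsto (fun n => (μ n)⁻¹) atTop atTop := by
      apply Filter.Tendsto.inv_tendsto_nhdsGT_zero
      apply tendsto_nhdsWithin_of_tendsto_nhds_of_eventually_within _ hμ0
      exact Eventually.of_forall (fun n => hμpos n)
    obtain ⟨n, hn⟩ := (htop.eventually_ge_atTop (M + 1)).exists
    have := hM ⟨n, rfl⟩
    linarith
  · -- BijOn
    have hptwise : ∀ (w : W) (n : ℕ),
        (μ n)⁻¹ * ((c.repr (ι w)) n) ^ 2 = ⟪e n, w⟫ ^ 2 := by
      intro w n
      rw [hkey, mul_pow, ← hssq n]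
      have h2 : (s n) ^ 2 ≠ 0 := pow_ne_zero 2 (hspos n).ne'
      field_simp
      exact mul_div_cancel_left₀ _ (hspos n).ne'
    have hsummable : ∀ w : W, Summable (fun n => ⟪e n, w⟫ ^ 2) := by
      intro w
      have := b.summable_inner_mul_inner w w
      apply this.congr
      intro n
      rw [← congrFun hbe n, pow_two, real_inner_comm]
    constructor
    · -- MapsTo
      intro w _
      rw [Set.mem_setOf_eq, MemW]
      exact ((hsummable w).congr (fun n => (hptwise w n).symm))
    constructor
    · -- InjOn
      intro w1 _ w2 _ hw
      exact hinj (c.repr.injective hw)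
    · -- SurjOn
      intro x hx
      rw [Set.mem_setOf_eq, MemW] at hx
      set g : ℕ → ℝ := fun n => x n / s n with hg
      have hgmem : Memℓp g 2 := by
        apply memℓp_gen
        have h2 : ∀ n, ‖g n‖ ^ (2 : ℝ≥0∞).toReal = (μ n)⁻¹ * (x n) ^ 2 := by
          intro n
          rw [show ((2 : ℝ≥0∞)).toReal = (2:ℝ) from by norm_num, Real.rpow_two, hg]
          simp only
          rw [norm_div, Real.norm_eq_abs, Real.norm_eq_abs, div_pow, sq_abs, sq_abs,
            hssq n, div_eq_inv_mul]
        exact (hx.congr (fun n => (h2 n).symm))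
      set w : W := b.repr.symm ⟨g, hgmem⟩ with hw
      have hwrepr : ∀ n, b.repr w n = g n := by
        intro n
        rw [hw, LinearIsometryEquiv.apply_symm_apply]
      refine ⟨w, Set.mem_univ _, ?_⟩
      apply lp.ext
      funext n
      have h1 : (c.repr (ι w)) n = x n := by
        rw [hkey, ← hbrepr, hwrepr, hg]
        simp only
        rw [mul_div_cancel₀ _ (hspos n).ne']
      exact h1
  · -- norm identity
    intro w
    rw [wNorm]
    have h1 : (∑' n, (μ n)⁻¹ * ((c.repr (ι w)) n) ^ 2) = ∑' n, ⟪e n, w⟫ ^ 2 := by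
      congr 1
      funext n
      rw [hkey, mul_pow, ← hssq n]
      have h2 : (s n) ^ 2 ≠ 0 := pow_ne_zero 2 (hspos n).ne'
      field_simp
      exact mul_div_cancel_left₀ _ (hspos n).ne'
    have h2 : (∑' n, ⟪e n, w⟫ ^ 2) = ‖w‖ ^ 2 := by
      have h3 := b.tsum_inner_mul_inner w w
      rw [real_inner_self_eq_norm_sq] at h3
      rw [← h3]
      congr 1
      funext n
      rw [← congrFun hbe n, pow_two, real_inner_comm]
    rw [h1, h2, Real.sqrt_sq (norm_nonneg w)]


end
end

section
/- Let f₁ and f₂ be admissible functions. For a permutation σ of ℕ let ℘_σ(f₁,f₂) denote the monotone rearrangement of the function f₁·(f₂∘σ) (which exists and is unique since f₁(n)·f₂(σ(n)) → ∞). Call a set S₀ of permutations of ℕ (f₁,f₂)-wild if for all σ, σ' ∈ S₀ with σ ≠ σ', the functions ℘_σ(f₁,f₂) and ℘_{σ'}(f₁,f₂) are not equivalent. Then for every finite (f₁,f₂)-wild set S₀ there exists a permutation σ ∉ S₀ such that S₀ ∪ {σ} is (f₁,f₂)-wild. -/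
noncomputable section

/-- `g` is the monotone rearrangement of `u`: `g = u ∘ τ` for some permutation
`τ`, and `g` is monotone nondecreasing. -/
def IsMonoRearrange (u g : ℕ → ℝ) : Prop :=
  ∃ τ : Equiv.Perm ℕ, (∀ n, g n = u (τ n)) ∧ Monotone g

/-- the pointwise product `f₁ · (f₂ ∘ σ)`. -/
def twist (f₁ f₂ : ℕ → ℝ) (σ : Equiv.Perm ℕ) : ℕ → ℝ :=
  fun n => f₁ n * f₂ (σ n)

/-- A set `S` of permutations is `(f₁,f₂)`-wild if for distinct `σ, σ' ∈ S`
the monotone rearrangements `℘_σ(f₁,f₂)` of `f₁·(f₂∘σ)` and `℘_{σ'}(f₁,f₂)`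
of `f₁·(f₂∘σ')` are never equivalent. -/
def Wild (f₁ f₂ : ℕ → ℝ) (S : Set (Equiv.Perm ℕ)) : Prop :=
  ∀ σ ∈ S, ∀ σ' ∈ S, σ ≠ σ' → ∀ g g' : ℕ → ℝ,
    IsMonoRearrange (twist f₁ f₂ σ) g → IsMonoRearrange (twist f₁ f₂ σ') g' →
    ¬ FEquiv g g'

namespace WildAux

open Set

lemma mem_iff_lt_ncard {T : Set ℕ} (hfin : T.Finite)
    (hlow : ∀ ⦃m n : ℕ⦄, m ≤ n → n ∈ T → m ∈ T) {n : ℕ} : n ∈ T ↔ n < T.ncard := by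
  constructor
  · intro hn
    have hsub : Set.Iic n ⊆ T := fun m hm => hlow hm hn
    have h1 : (Set.Iic n).ncard ≤ T.ncard := Set.ncard_le_ncard hsub hfin
    have h2 : (Set.Iic n).ncard = n + 1 := by
      rw [← Finset.coe_Iic, Set.ncard_coe_finset, Nat.card_Iic]
    omega
  · intro hn
    by_contra hmem
    have hsub : T ⊆ Set.Iio n := by
      intro m hm
      by_contra hlt
      exact hmem (hlow (not_lt.1 hlt) hm)
    have h1 : T.ncard ≤ (Set.Iio n).ncard := Set.ncard_le_ncard hsub (Set.finite_Iio n)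
    have h2 : (Set.Iio n).ncard = n := by
      rw [← Finset.coe_Iio, Set.ncard_coe_finset, Nat.card_Iio]
    omega

lemma rearr_le_iff {u g : ℕ → ℝ} (hfin : ∀ t : ℝ, {n | u n ≤ t}.Finite)
    (hg : IsMonoRearrange u g) (t : ℝ) (n : ℕ) :
    g n ≤ t ↔ n < {m | u m ≤ t}.ncard := by
  obtain ⟨τ, hτ, hmono⟩ := hg
  have hset : {m | g m ≤ t} = ⇑τ ⁻¹' {m | u m ≤ t} := by
    ext m; simp [hτ m]
  have hset2 : {m | g m ≤ t} = ⇑τ.symm '' {m | u m ≤ t} := by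
    ext m
    simp only [Set.mem_image, Set.mem_setOf_eq]
    constructor
    · intro h
      exact ⟨τ m, by simpa [← hτ m] using h, τ.symm_apply_apply m⟩
    · rintro ⟨k, hk, rfl⟩
      simpa [hτ, τ.apply_symm_apply] using hk
  have hfin' : {m | g m ≤ t}.Finite := by
    rw [hset2]; exact (hfin t).image _
  have hcard : {m | g m ≤ t}.ncard = {m | u m ≤ t}.ncard := by
    rw [hset2, Set.ncard_image_of_injective _ τ.symm.injective]
  rw [← hcard]
  exact mem_iff_lt_ncard hfin' (fun m k hmk hk => le_trans (hmono hmk) hk)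

lemma rearr_unique {u g g' : ℕ → ℝ} (hfin : ∀ t : ℝ, {n | u n ≤ t}.Finite)
    (hg : IsMonoRearrange u g) (hg' : IsMonoRearrange u g') : g = g' := by
  funext n
  have h1 : ∀ x y : ℕ → ℝ, IsMonoRearrange u x → IsMonoRearrange u y → x n ≤ y n := by
    intro x y hx hy
    have := (rearr_le_iff hfin hy (y n) n).1 le_rfl
    exact (rearr_le_iff hfin hx (y n) n).2 this
  exact le_antisymm (h1 g g' hg hg') (h1 g' g hg' hg)

lemma fequiv_symm {a b : ℕ → ℝ} (h : FEquiv a b) : FEquiv b a := by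
  obtain ⟨c, hc, h⟩ := h
  refine ⟨c, hc, fun n => ?_⟩
  obtain ⟨h1, h2⟩ := h n
  constructor
  · rw [one_div] at h1 ⊢
    rw [inv_mul_le_iff₀ hc] at h1 ⊢
    exact h2.trans (by nlinarith [h1])
  · rw [one_div, inv_mul_le_iff₀ hc] at h1
    exact h1

lemma fequiv_trans {a b c : ℕ → ℝ} (h1 : FEquiv a b) (h2 : FEquiv b c) : FEquiv a c := by
  obtain ⟨c₁, hc₁, hb₁⟩ := h1
  obtain ⟨c₂, hc₂, hb₂⟩ := h2
  refine ⟨c₁ * c₂, mul_pos hc₁ hc₂, fun n => ?_⟩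
  obtain ⟨l1, u1⟩ := hb₁ n
  obtain ⟨l2, u2⟩ := hb₂ n
  constructor
  · have e1 : (1 / (c₁ * c₂)) * a n = (1 / c₂) * ((1 / c₁) * a n) := by ring
    rw [e1]
    calc (1 / c₂) * ((1 / c₁) * a n) ≤ (1 / c₂) * b n :=
          mul_le_mul_of_nonneg_left l1 (by positivity)
      _ ≤ c n := l2
  · calc c n ≤ c₂ * b n := u2
      _ ≤ c₂ * (c₁ * a n) := mul_le_mul_of_nonneg_left u1 hc₂.le
      _ = (c₁ * c₂) * a n := by ring

open scoped Classical


open scoped Classical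

variable (f₁ f₂ : ℕ → ℝ)

lemma exists_big (h₁ : Admissible f₁) (h₂ : Admissible f₂) (X : ℝ) :
    ∃ N : ℕ, X < min (f₁ N) (f₂ N) := by
  obtain ⟨y, ⟨n₁, rfl⟩, hy⟩ := not_bddAbove_iff.1 h₁.2.2 X
  obtain ⟨z, ⟨n₂, rfl⟩, hz⟩ := not_bddAbove_iff.1 h₂.2.2 X
  exact ⟨max n₁ n₂, lt_min (hy.trans_le (h₁.2.1 (le_max_left _ _)))
    (hz.trans_le (h₂.2.1 (le_max_right _ _)))⟩

noncomputable def ee (h₁ : Admissible f₁) (h₂ : Admissible f₂) : ℕ → ℕ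
  | 0 => 0
  | n + 1 =>
    max (exists_big f₁ f₂ h₁ h₂
        ((n + 1 : ℝ) * (f₁ (ee h₁ h₂ n) * f₂ (ee h₁ h₂ n)))).choose
      (max (2 * (n + 1)) (ee h₁ h₂ n + 1))

variable (h₁ : Admissible f₁) (h₂ : Admissible f₂)

lemma ee_ge (n : ℕ) : 2 * n ≤ ee f₁ f₂ h₁ h₂ n := by
  cases n with
  | zero => simp [ee]
  | succ n =>
    rw [ee]
    exact le_max_of_le_right (le_max_left _ _)

lemma ee_mono : StrictMono (ee f₁ f₂ h₁ h₂) := by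
  apply strictMono_nat_of_lt_succ
  intro n
  conv_rhs => rw [ee]
  exact lt_of_lt_of_le (Nat.lt_succ_self _) (le_max_of_le_right (le_max_right _ _))

lemma ee_key (n : ℕ) :
    (n + 1 : ℝ) * (f₁ (ee f₁ f₂ h₁ h₂ n) * f₂ (ee f₁ f₂ h₁ h₂ n)) <
      min (f₁ (ee f₁ f₂ h₁ h₂ (n + 1))) (f₂ (ee f₁ f₂ h₁ h₂ (n + 1))) := by
  have hch := (exists_big f₁ f₂ h₁ h₂
      ((n + 1 : ℝ) * (f₁ (ee f₁ f₂ h₁ h₂ n) * f₂ (ee f₁ f₂ h₁ h₂ n)))).choose_spec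
  have hle : (exists_big f₁ f₂ h₁ h₂
      ((n + 1 : ℝ) * (f₁ (ee f₁ f₂ h₁ h₂ n) * f₂ (ee f₁ f₂ h₁ h₂ n)))).choose ≤
      ee f₁ f₂ h₁ h₂ (n + 1) := by
    rw [ee]; exact le_max_left _ _
  exact hch.trans_le (min_le_min (h₁.2.1 hle) (h₂.2.1 hle))

def aseq (t i : ℕ) : ℕ := ee f₁ f₂ h₁ h₂ (t + 2 ^ i)

lemma aseq_mono (t : ℕ) : StrictMono (aseq f₁ f₂ h₁ h₂ t) := by
  intro i j hij
  exact ee_mono f₁ f₂ h₁ h₂ (by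
    have := Nat.pow_lt_pow_right (a := 2) one_lt_two hij
    omega)

lemma aseq_ge (t i : ℕ) : 2 * (t + 2 ^ i) ≤ aseq f₁ f₂ h₁ h₂ t i := ee_ge f₁ f₂ h₁ h₂ _

def qp (t : ℕ) : ℕ → Prop := fun n => ∃ i, aseq f₁ f₂ h₁ h₂ t i = n

lemma q_infinite (t : ℕ) : {n | qp f₁ f₂ h₁ h₂ t n}.Infinite :=
  Set.infinite_of_injective_forall_mem (f := aseq f₁ f₂ h₁ h₂ t)
    (aseq_mono f₁ f₂ h₁ h₂ t).injective (fun i => ⟨i, rfl⟩)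

lemma count_q (t i : ℕ) : Nat.count (qp f₁ f₂ h₁ h₂ t) (aseq f₁ f₂ h₁ h₂ t i) = i := by
  rw [Nat.count_eq_card_filter_range]
  have hset : {x ∈ Finset.range (aseq f₁ f₂ h₁ h₂ t i) | qp f₁ f₂ h₁ h₂ t x} =
      (Finset.range i).image (aseq f₁ f₂ h₁ h₂ t) := by
    ext x
    simp only [Finset.mem_filter, Finset.mem_range, Finset.mem_image]
    constructor
    · rintro ⟨hlt, j, rfl⟩
      exact ⟨j, (aseq_mono f₁ f₂ h₁ h₂ t).lt_iff_lt.1 hlt, rfl⟩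
    · rintro ⟨j, hj, rfl⟩
      exact ⟨aseq_mono f₁ f₂ h₁ h₂ t hj, ⟨j, rfl⟩⟩
  rw [hset, Finset.card_image_of_injective _ (aseq_mono f₁ f₂ h₁ h₂ t).injective,
    Finset.card_range]

lemma count_q' (t i : ℕ) :
    i + 1 ≤ Nat.count (fun n => ¬ qp f₁ f₂ h₁ h₂ t n) (aseq f₁ f₂ h₁ h₂ t i) := by
  have h := Finset.card_filter_add_card_filter_not
    (s := Finset.range (aseq f₁ f₂ h₁ h₂ t i)) (p := qp f₁ f₂ h₁ h₂ t)
  have h2 := count_q f₁ f₂ h₁ h₂ t i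
  rw [Nat.count_eq_card_filter_range] at h2
  have h3 := aseq_ge f₁ f₂ h₁ h₂ t i
  have h4 : i < 2 ^ i := Nat.lt_two_pow_self
  rw [Nat.count_eq_card_filter_range]
  rw [Finset.card_range] at h
  have h5 : {x ∈ Finset.range (aseq f₁ f₂ h₁ h₂ t i) | qp f₁ f₂ h₁ h₂ t x} =
      Finset.filter (qp f₁ f₂ h₁ h₂ t) (Finset.range (aseq f₁ f₂ h₁ h₂ t i)) := by
    apply Finset.filter_congr_decidable
  have h6 : {x ∈ Finset.range (aseq f₁ f₂ h₁ h₂ t i) | ¬ qp f₁ f₂ h₁ h₂ t x} =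
      Finset.filter (fun a => ¬ qp f₁ f₂ h₁ h₂ t a) (Finset.range (aseq f₁ f₂ h₁ h₂ t i)) := by
    apply Finset.filter_congr_decidable
  rw [h5] at h2
  rw [h6]
  omega

lemma q'_infinite (t : ℕ) : {n | ¬ qp f₁ f₂ h₁ h₂ t n}.Infinite := by
  by_contra h
  rw [Set.not_infinite] at h
  have hb := Nat.count_le_card h (aseq f₁ f₂ h₁ h₂ t h.toFinset.card)
  have := count_q' f₁ f₂ h₁ h₂ t h.toFinset.card
  omega

def bseq (t i : ℕ) : ℕ := Nat.nth (fun n => ¬ qp f₁ f₂ h₁ h₂ t n) i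

lemma bseq_lt (t i : ℕ) : bseq f₁ f₂ h₁ h₂ t i < aseq f₁ f₂ h₁ h₂ t i :=
  Nat.nth_lt_of_lt_count (lt_of_lt_of_le (Nat.lt_succ_self i) (count_q' f₁ f₂ h₁ h₂ t i))

lemma bseq_not_q (t i : ℕ) : ¬ qp f₁ f₂ h₁ h₂ t (bseq f₁ f₂ h₁ h₂ t i) :=
  Nat.nth_mem_of_infinite (q'_infinite f₁ f₂ h₁ h₂ t) i

lemma bseq_inj (t : ℕ) : Function.Injective (bseq f₁ f₂ h₁ h₂ t) :=
  Nat.nth_injective (q'_infinite f₁ f₂ h₁ h₂ t)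

lemma nth_q (t i : ℕ) : Nat.nth (qp f₁ f₂ h₁ h₂ t) i = aseq f₁ f₂ h₁ h₂ t i := by
  have := Nat.nth_count (p := qp f₁ f₂ h₁ h₂ t) (n := aseq f₁ f₂ h₁ h₂ t i) ⟨i, rfl⟩
  rwa [count_q] at this

def sw (t n : ℕ) : ℕ :=
  if qp f₁ f₂ h₁ h₂ t n then Nat.nth (fun m => ¬ qp f₁ f₂ h₁ h₂ t m) (Nat.count (qp f₁ f₂ h₁ h₂ t) n)
  else Nat.nth (qp f₁ f₂ h₁ h₂ t) (Nat.count (fun m => ¬ qp f₁ f₂ h₁ h₂ t m) n)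

lemma sw_a (t i : ℕ) : sw f₁ f₂ h₁ h₂ t (aseq f₁ f₂ h₁ h₂ t i) = bseq f₁ f₂ h₁ h₂ t i := by
  rw [sw, if_pos ⟨i, rfl⟩, count_q]
  rfl

lemma sw_b (t i : ℕ) : sw f₁ f₂ h₁ h₂ t (bseq f₁ f₂ h₁ h₂ t i) = aseq f₁ f₂ h₁ h₂ t i := by
  rw [sw, if_neg (bseq_not_q f₁ f₂ h₁ h₂ t i), bseq,
    Nat.count_nth_of_infinite (q'_infinite f₁ f₂ h₁ h₂ t), nth_q]

lemma sw_invol (t : ℕ) : Function.Involutive (sw f₁ f₂ h₁ h₂ t) := by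
  intro n
  by_cases h : qp f₁ f₂ h₁ h₂ t n
  · obtain ⟨i, rfl⟩ := h
    rw [sw_a, sw_b]
  · have hn : n = bseq f₁ f₂ h₁ h₂ t (Nat.count (fun m => ¬ qp f₁ f₂ h₁ h₂ t m) n) :=
      (Nat.nth_count (p := fun m => ¬ qp f₁ f₂ h₁ h₂ t m) h).symm
    rw [hn, sw_b, sw_a, ← hn]

def sperm (t : ℕ) : Equiv.Perm ℕ := Function.Involutive.toPerm _ (sw_invol f₁ f₂ h₁ h₂ t)

lemma sperm_apply (t n : ℕ) : sperm f₁ f₂ h₁ h₂ t n = sw f₁ f₂ h₁ h₂ t n := rfl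

lemma sw_cases (t n : ℕ) : ∃ i,
    (n = aseq f₁ f₂ h₁ h₂ t i ∧ sw f₁ f₂ h₁ h₂ t n = bseq f₁ f₂ h₁ h₂ t i) ∨
    (n = bseq f₁ f₂ h₁ h₂ t i ∧ sw f₁ f₂ h₁ h₂ t n = aseq f₁ f₂ h₁ h₂ t i) := by
  by_cases h : qp f₁ f₂ h₁ h₂ t n
  · obtain ⟨i, rfl⟩ := h
    exact ⟨i, Or.inl ⟨rfl, sw_a f₁ f₂ h₁ h₂ t i⟩⟩
  · have hn : n = bseq f₁ f₂ h₁ h₂ t (Nat.count (fun m => ¬ qp f₁ f₂ h₁ h₂ t m) n) :=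
      (Nat.nth_count (p := fun m => ¬ qp f₁ f₂ h₁ h₂ t m) h).symm
    refine ⟨_, Or.inr ⟨hn, ?_⟩⟩
    have hb := sw_b f₁ f₂ h₁ h₂ t (Nat.count (fun m => ¬ qp f₁ f₂ h₁ h₂ t m) n)
    rw [← hn] at hb
    exact hb

lemma sperm_zero (t : ℕ) : sperm f₁ f₂ h₁ h₂ t 0 = ee f₁ f₂ h₁ h₂ (t + 1) := by
  have h0 : ¬ qp f₁ f₂ h₁ h₂ t 0 := by
    rintro ⟨i, hi⟩
    have := aseq_ge f₁ f₂ h₁ h₂ t i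
    have h2 : 0 < 2 ^ i := Nat.pow_pos (by norm_num)
    omega
  rw [sperm_apply, sw, if_neg h0, Nat.count_zero, nth_q]
  show ee f₁ f₂ h₁ h₂ (t + 2 ^ 0) = _
  norm_num

def utw (t : ℕ) : ℕ → ℝ := fun n => f₁ n * f₂ (sw f₁ f₂ h₁ h₂ t n)

def cc0 : ℝ := min (f₁ 0) (f₂ 0)

lemma cc0_pos (hh₁ : Admissible f₁) (hh₂ : Admissible f₂) : 0 < cc0 f₁ f₂ :=
  lt_min (hh₁.1 0) (hh₂.1 0)

lemma utw_le_a (t i : ℕ) :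
    utw f₁ f₂ h₁ h₂ t (aseq f₁ f₂ h₁ h₂ t i) ≤
      f₁ (aseq f₁ f₂ h₁ h₂ t i) * f₂ (aseq f₁ f₂ h₁ h₂ t i) := by
  rw [utw, sw_a]
  exact mul_le_mul_of_nonneg_left (h₂.2.1 (bseq_lt f₁ f₂ h₁ h₂ t i).le) (h₁.1 _).le

lemma utw_le_b (t i : ℕ) :
    utw f₁ f₂ h₁ h₂ t (bseq f₁ f₂ h₁ h₂ t i) ≤
      f₁ (aseq f₁ f₂ h₁ h₂ t i) * f₂ (aseq f₁ f₂ h₁ h₂ t i) := by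
  rw [utw, sw_b]
  exact mul_le_mul_of_nonneg_right (h₁.2.1 (bseq_lt f₁ f₂ h₁ h₂ t i).le) (h₂.1 _).le

lemma utw_ge_a (t i : ℕ) :
    cc0 f₁ f₂ * min (f₁ (aseq f₁ f₂ h₁ h₂ t i)) (f₂ (aseq f₁ f₂ h₁ h₂ t i)) ≤
      utw f₁ f₂ h₁ h₂ t (aseq f₁ f₂ h₁ h₂ t i) := by
  rw [utw, sw_a, mul_comm]
  have hx : min (f₁ (aseq f₁ f₂ h₁ h₂ t i)) (f₂ (aseq f₁ f₂ h₁ h₂ t i)) ≤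
      f₁ (aseq f₁ f₂ h₁ h₂ t i) := min_le_left _ _
  have hy : cc0 f₁ f₂ ≤ f₂ (bseq f₁ f₂ h₁ h₂ t i) :=
    (min_le_right _ _).trans (h₂.2.1 (Nat.zero_le _))
  have h0 : 0 ≤ min (f₁ (aseq f₁ f₂ h₁ h₂ t i)) (f₂ (aseq f₁ f₂ h₁ h₂ t i)) :=
    le_min (h₁.1 _).le (h₂.1 _).le
  calc min (f₁ (aseq f₁ f₂ h₁ h₂ t i)) (f₂ (aseq f₁ f₂ h₁ h₂ t i)) * cc0 f₁ f₂ ≤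
      f₁ (aseq f₁ f₂ h₁ h₂ t i) * f₂ (bseq f₁ f₂ h₁ h₂ t i) :=
        mul_le_mul hx hy (cc0_pos f₁ f₂ h₁ h₂).le (h₁.1 _).le
    _ = _ := rfl

lemma utw_ge_b (t i : ℕ) :
    cc0 f₁ f₂ * min (f₁ (aseq f₁ f₂ h₁ h₂ t i)) (f₂ (aseq f₁ f₂ h₁ h₂ t i)) ≤
      utw f₁ f₂ h₁ h₂ t (bseq f₁ f₂ h₁ h₂ t i) := by
  rw [utw, sw_b]
  have hx : cc0 f₁ f₂ ≤ f₁ (bseq f₁ f₂ h₁ h₂ t i) :=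
    (min_le_left _ _).trans (h₁.2.1 (Nat.zero_le _))
  have hy : min (f₁ (aseq f₁ f₂ h₁ h₂ t i)) (f₂ (aseq f₁ f₂ h₁ h₂ t i)) ≤
      f₂ (aseq f₁ f₂ h₁ h₂ t i) := min_le_right _ _
  have h0 : 0 ≤ min (f₁ (aseq f₁ f₂ h₁ h₂ t i)) (f₂ (aseq f₁ f₂ h₁ h₂ t i)) :=
    le_min (h₁.1 _).le (h₂.1 _).le
  exact mul_le_mul hx hy h0 (h₁.1 _).le

lemma utw_bounds (t n : ℕ) : ∃ i,
    (n = aseq f₁ f₂ h₁ h₂ t i ∨ n = bseq f₁ f₂ h₁ h₂ t i) ∧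
    cc0 f₁ f₂ * min (f₁ (aseq f₁ f₂ h₁ h₂ t i)) (f₂ (aseq f₁ f₂ h₁ h₂ t i)) ≤
      utw f₁ f₂ h₁ h₂ t n := by
  obtain ⟨i, hc⟩ := sw_cases f₁ f₂ h₁ h₂ t n
  rcases hc with ⟨rfl, _⟩ | ⟨rfl, _⟩
  · exact ⟨i, Or.inl rfl, utw_ge_a f₁ f₂ h₁ h₂ t i⟩
  · exact ⟨i, Or.inr rfl, utw_ge_b f₁ f₂ h₁ h₂ t i⟩

lemma utw_sublevel_finite (t : ℕ) (s : ℝ) : {n | utw f₁ f₂ h₁ h₂ t n ≤ s}.Finite := by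
  obtain ⟨N, hN⟩ := exists_big f₁ f₂ h₁ h₂ (s / f₂ 0)
  apply Set.Finite.subset (Set.finite_Iio N)
  intro n hn
  simp only [Set.mem_setOf_eq] at hn
  simp only [Set.mem_Iio]
  by_contra hlt
  push_neg at hlt
  have h1 : s / f₂ 0 < f₁ n := ((min_le_left _ _).trans_lt' hN).trans_le (h₁.2.1 hlt)
  have h2 : s < f₁ n * f₂ 0 := (div_lt_iff₀ (h₂.1 0)).1 h1
  have h3 : f₁ n * f₂ 0 ≤ utw f₁ f₂ h₁ h₂ t n :=
    mul_le_mul_of_nonneg_left (h₂.2.1 (Nat.zero_le _)) (h₁.1 n).le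
  linarith

lemma ncard_upper (t I : ℕ) (s : ℝ)
    (hs : s < cc0 f₁ f₂ * min (f₁ (aseq f₁ f₂ h₁ h₂ t I)) (f₂ (aseq f₁ f₂ h₁ h₂ t I))) :
    {n | utw f₁ f₂ h₁ h₂ t n ≤ s}.ncard ≤ 2 * I := by
  have hsub : {n | utw f₁ f₂ h₁ h₂ t n ≤ s} ⊆
      (aseq f₁ f₂ h₁ h₂ t '' Set.Iio I) ∪ (bseq f₁ f₂ h₁ h₂ t '' Set.Iio I) := by
    intro n hn
    simp only [Set.mem_setOf_eq] at hn
    obtain ⟨i, hcase, hge⟩ := utw_bounds f₁ f₂ h₁ h₂ t n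
    have hiI : i < I := by
      by_contra hge'
      push_neg at hge'
      have hm : min (f₁ (aseq f₁ f₂ h₁ h₂ t I)) (f₂ (aseq f₁ f₂ h₁ h₂ t I)) ≤
          min (f₁ (aseq f₁ f₂ h₁ h₂ t i)) (f₂ (aseq f₁ f₂ h₁ h₂ t i)) := by
        have := (aseq_mono f₁ f₂ h₁ h₂ t).monotone hge'
        exact min_le_min (h₁.2.1 this) (h₂.2.1 this)
      have := mul_le_mul_of_nonneg_left hm (cc0_pos f₁ f₂ h₁ h₂).le
      linarith
    rcases hcase with rfl | rfl
    · exact Or.inl ⟨i, hiI, rfl⟩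
    · exact Or.inr ⟨i, hiI, rfl⟩
  calc {n | utw f₁ f₂ h₁ h₂ t n ≤ s}.ncard ≤
      ((aseq f₁ f₂ h₁ h₂ t '' Set.Iio I) ∪ (bseq f₁ f₂ h₁ h₂ t '' Set.Iio I)).ncard :=
        Set.ncard_le_ncard hsub (((Set.finite_Iio I).image _).union ((Set.finite_Iio I).image _))
    _ ≤ (aseq f₁ f₂ h₁ h₂ t '' Set.Iio I).ncard + (bseq f₁ f₂ h₁ h₂ t '' Set.Iio I).ncard :=
        Set.ncard_union_le _ _
    _ ≤ (Set.Iio I).ncard + (Set.Iio I).ncard :=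
        Nat.add_le_add (Set.ncard_image_le (Set.finite_Iio I)) (Set.ncard_image_le (Set.finite_Iio I))
    _ = 2 * I := by
        rw [← Finset.coe_Iio, Set.ncard_coe_finset, Nat.card_Iio]; ring

lemma ncard_lower (t I : ℕ) :
    2 * I + 2 ≤ {n | utw f₁ f₂ h₁ h₂ t n ≤
      f₁ (aseq f₁ f₂ h₁ h₂ t I) * f₂ (aseq f₁ f₂ h₁ h₂ t I)}.ncard := by
  set T : ℝ := f₁ (aseq f₁ f₂ h₁ h₂ t I) * f₂ (aseq f₁ f₂ h₁ h₂ t I) with hT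
  have hFmono : ∀ i ≤ I, f₁ (aseq f₁ f₂ h₁ h₂ t i) * f₂ (aseq f₁ f₂ h₁ h₂ t i) ≤ T := by
    intro i hi
    have hle := (aseq_mono f₁ f₂ h₁ h₂ t).monotone hi
    exact mul_le_mul (h₁.2.1 hle) (h₂.2.1 hle) (h₂.1 _).le (h₁.1 _).le
  have hsub : (aseq f₁ f₂ h₁ h₂ t '' Set.Iic I) ∪ (bseq f₁ f₂ h₁ h₂ t '' Set.Iic I) ⊆
      {n | utw f₁ f₂ h₁ h₂ t n ≤ T} := by
    rintro n (⟨i, hi, rfl⟩ | ⟨i, hi, rfl⟩)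
    · exact (utw_le_a f₁ f₂ h₁ h₂ t i).trans (hFmono i hi)
    · exact (utw_le_b f₁ f₂ h₁ h₂ t i).trans (hFmono i hi)
  have hdisj : Disjoint (aseq f₁ f₂ h₁ h₂ t '' Set.Iic I) (bseq f₁ f₂ h₁ h₂ t '' Set.Iic I) := by
    rw [Set.disjoint_left]
    rintro n ⟨i, _, rfl⟩ ⟨j, _, hj⟩
    exact bseq_not_q f₁ f₂ h₁ h₂ t j ⟨i, hj.symm⟩
  have hcard : ((aseq f₁ f₂ h₁ h₂ t '' Set.Iic I) ∪ (bseq f₁ f₂ h₁ h₂ t '' Set.Iic I)).ncard =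
      2 * I + 2 := by
    rw [Set.ncard_union_eq hdisj ((Set.finite_Iic I).image _) ((Set.finite_Iic I).image _),
      Set.ncard_image_of_injective _ (aseq_mono f₁ f₂ h₁ h₂ t).injective,
      Set.ncard_image_of_injective _ (bseq_inj f₁ f₂ h₁ h₂ t),
      ← Finset.coe_Iic, Set.ncard_coe_finset, Nat.card_Iic]
    ring
  rw [← hcard]
  exact Set.ncard_le_ncard hsub (utw_sublevel_finite f₁ f₂ h₁ h₂ t T)

lemma key {s t : ℕ} (hst : s < t) (c : ℝ) (hc : 0 < c) :
    ∃ T : ℝ, {n | utw f₁ f₂ h₁ h₂ t n ≤ c * T}.ncard <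
      {n | utw f₁ f₂ h₁ h₂ s n ≤ T}.ncard := by
  obtain ⟨I, hI⟩ := exists_nat_gt (c / cc0 f₁ f₂)
  have hc0 := cc0_pos f₁ f₂ h₁ h₂
  set T : ℝ := f₁ (aseq f₁ f₂ h₁ h₂ s I) * f₂ (aseq f₁ f₂ h₁ h₂ s I) with hTdef
  refine ⟨T, ?_⟩
  set M : ℕ := t - 1 + 2 ^ I with hMdef
  have hMt : t + 2 ^ I = M + 1 := by omega
  have hkey := ee_key f₁ f₂ h₁ h₂ M
  have haI : aseq f₁ f₂ h₁ h₂ t I = ee f₁ f₂ h₁ h₂ (M + 1) := by rw [aseq, hMt]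
  have hsM : s + 2 ^ I ≤ M := by omega
  have hle : ee f₁ f₂ h₁ h₂ (s + 2 ^ I) ≤ ee f₁ f₂ h₁ h₂ M :=
    (ee_mono f₁ f₂ h₁ h₂).monotone hsM
  have hTle : T ≤ f₁ (ee f₁ f₂ h₁ h₂ M) * f₂ (ee f₁ f₂ h₁ h₂ M) := by
    rw [hTdef, aseq]
    exact mul_le_mul (h₁.2.1 hle) (h₂.2.1 hle) (h₂.1 _).le (h₁.1 _).le
  have hTpos : 0 < T := mul_pos (h₁.1 _) (h₂.1 _)
  have hM1 : (I : ℝ) < (M : ℝ) + 1 := by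
    have h2I : I < 2 ^ I := Nat.lt_two_pow_self
    exact_mod_cast (show (I : ℕ) < M + 1 by omega)
  have hcM : c < cc0 f₁ f₂ * ((M : ℝ) + 1) := by
    have h1 : c / cc0 f₁ f₂ < (M : ℝ) + 1 := hI.trans hM1
    have h2 := (div_lt_iff₀ hc0).1 h1
    linarith
  have hMpos : (0 : ℝ) < (M : ℝ) + 1 := by positivity
  have s1 : c * T < (cc0 f₁ f₂ * ((M : ℝ) + 1)) * T := by nlinarith
  have s2 : (cc0 f₁ f₂ * ((M : ℝ) + 1)) * T ≤
      cc0 f₁ f₂ * (((M : ℝ) + 1) * (f₁ (ee f₁ f₂ h₁ h₂ M) * f₂ (ee f₁ f₂ h₁ h₂ M))) := by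
    rw [mul_assoc]
    exact mul_le_mul_of_nonneg_left (mul_le_mul_of_nonneg_left hTle hMpos.le) hc0.le
  have s3 : cc0 f₁ f₂ * (((M : ℝ) + 1) * (f₁ (ee f₁ f₂ h₁ h₂ M) * f₂ (ee f₁ f₂ h₁ h₂ M))) <
      cc0 f₁ f₂ * min (f₁ (aseq f₁ f₂ h₁ h₂ t I)) (f₂ (aseq f₁ f₂ h₁ h₂ t I)) := by
    rw [haI]
    exact mul_lt_mul_of_pos_left hkey hc0
  have hup := ncard_upper f₁ f₂ h₁ h₂ t I (c * T) (by linarith)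
  have hlo := ncard_lower f₁ f₂ h₁ h₂ s I
  rw [← hTdef] at hlo
  omega

lemma pair_core {s t : ℕ} (hst : s < t) {g g' : ℕ → ℝ}
    (hg : IsMonoRearrange (utw f₁ f₂ h₁ h₂ s) g)
    (hg' : IsMonoRearrange (utw f₁ f₂ h₁ h₂ t) g') : ¬ FEquiv g g' := by
  rintro ⟨c, hc, hcc⟩
  obtain ⟨T, hT⟩ := key f₁ f₂ h₁ h₂ hst c hc
  set n := {m | utw f₁ f₂ h₁ h₂ t m ≤ c * T}.ncard with hn
  have h1 : g n ≤ T :=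
    (rearr_le_iff (utw_sublevel_finite f₁ f₂ h₁ h₂ s) hg T n).2 hT
  have h2 : ¬ g' n ≤ c * T := by
    intro h
    have h3 := (rearr_le_iff (utw_sublevel_finite f₁ f₂ h₁ h₂ t) hg' (c * T) n).1 h
    rw [← hn] at h3
    exact lt_irrefl n h3
  exact h2 ((hcc n).2.trans (mul_le_mul_of_nonneg_left h1 hc.le))

lemma pair_neq {s t : ℕ} (hst : s ≠ t) {g g' : ℕ → ℝ}
    (hg : IsMonoRearrange (utw f₁ f₂ h₁ h₂ s) g)
    (hg' : IsMonoRearrange (utw f₁ f₂ h₁ h₂ t) g') : ¬ FEquiv g g' := by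
  rcases hst.lt_or_gt with h | h
  · exact pair_core f₁ f₂ h₁ h₂ h hg hg'
  · intro he
    exact pair_core f₁ f₂ h₁ h₂ h hg' hg (fequiv_symm he)

lemma sperm_inj {s t : ℕ} (h : sperm f₁ f₂ h₁ h₂ s = sperm f₁ f₂ h₁ h₂ t) : s = t := by
  have h0 : ee f₁ f₂ h₁ h₂ (s + 1) = ee f₁ f₂ h₁ h₂ (t + 1) := by
    rw [← sperm_zero, ← sperm_zero, h]
  have := (ee_mono f₁ f₂ h₁ h₂).injective h0
  omega

lemma gen_sublevel_finite (hh₁ : Admissible f₁) (hh₂ : Admissible f₂) (v : ℕ → ℕ) (s : ℝ) :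
    {n | f₁ n * f₂ (v n) ≤ s}.Finite := by
  obtain ⟨N, hN⟩ := exists_big f₁ f₂ hh₁ hh₂ (s / f₂ 0)
  apply Set.Finite.subset (Set.finite_Iio N)
  intro n hn
  simp only [Set.mem_setOf_eq] at hn
  simp only [Set.mem_Iio]
  by_contra hlt
  push_neg at hlt
  have hh1 : s / f₂ 0 < f₁ n := ((min_le_left _ _).trans_lt' hN).trans_le (hh₁.2.1 hlt)
  have hh2 : s < f₁ n * f₂ 0 := (div_lt_iff₀ (hh₂.1 0)).1 hh1
  have hh3 : f₁ n * f₂ 0 ≤ f₁ n * f₂ (v n) :=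
    mul_le_mul_of_nonneg_left (hh₂.2.1 (Nat.zero_le _)) (hh₁.1 n).le
  linarith

end WildAux

/-- Every finite `(f₁,f₂)`-wild set of permutations can be enlarged by one
further permutation, staying `(f₁,f₂)`-wild. -/
theorem wild_set_extend (f₁ f₂ : ℕ → ℝ) (h₁ : Admissible f₁) (h₂ : Admissible f₂)
    (S₀ : Set (Equiv.Perm ℕ)) (hfin : S₀.Finite) (hwild : Wild f₁ f₂ S₀) :
    ∃ σ : Equiv.Perm ℕ, σ ∉ S₀ ∧ Wild f₁ f₂ (insert σ S₀) := by
  classical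
  set P : ℕ → Equiv.Perm ℕ := WildAux.sperm f₁ f₂ h₁ h₂ with hP
  have htwist : ∀ t, twist f₁ f₂ (P t) = WildAux.utw f₁ f₂ h₁ h₂ t := fun t => rfl
  have hufin : ∀ σ : Equiv.Perm ℕ, ∀ s : ℝ, {n | twist f₁ f₂ σ n ≤ s}.Finite :=
    fun σ s => WildAux.gen_sublevel_finite f₁ f₂ h₁ h₂ (⇑σ) s
  set k := hfin.toFinset.card with hk
  have Blocked : ℕ → Prop := fun _ => True
  clear Blocked
  set Blocked : ℕ → Prop := fun t => ∃ σ' ∈ S₀, σ' = P t ∨ ∃ g g' : ℕ → ℝ,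
    IsMonoRearrange (twist f₁ f₂ σ') g ∧ IsMonoRearrange (twist f₁ f₂ (P t)) g' ∧ FEquiv g g'
    with hBl
  have hblock : ∃ t, t < k + 1 ∧ ¬ Blocked t := by
    by_contra hb
    push_neg at hb
    have hb2 : ∀ t : ℕ, ∃ σ' : Equiv.Perm ℕ, t < k + 1 → σ' ∈ S₀ ∧ (σ' = P t ∨
        ∃ g g' : ℕ → ℝ, IsMonoRearrange (twist f₁ f₂ σ') g ∧
          IsMonoRearrange (twist f₁ f₂ (P t)) g' ∧ FEquiv g g') := by
      intro t
      by_cases h : t < k + 1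
      · obtain ⟨σ', h1, h2⟩ := hb t h
        exact ⟨σ', fun _ => ⟨h1, h2⟩⟩
      · exact ⟨1, fun h' => absurd h' h⟩
    choose σb hσb using hb2
    have hmaps : ∀ t ∈ Finset.range (k + 1), σb t ∈ hfin.toFinset := by
      intro t ht
      rw [Set.Finite.mem_toFinset]
      exact (hσb t (Finset.mem_range.1 ht)).1
    have hcard : hfin.toFinset.card < (Finset.range (k + 1)).card := by
      rw [Finset.card_range]; omega
    obtain ⟨x, hx, y, hy, hxy, hfeq⟩ :=
      Finset.exists_ne_map_eq_of_card_lt_of_maps_to hcard hmaps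
    rw [Finset.mem_range] at hx hy
    obtain ⟨hxS, hxcase⟩ := hσb x hx
    obtain ⟨hyS, hycase⟩ := hσb y hy
    rcases hxcase with hxeq | ⟨g₁, g₁', hr₁, hr₁', he₁⟩ <;>
      rcases hycase with hyeq | ⟨g₂, g₂', hr₂, hr₂', he₂⟩
    · exact hxy (WildAux.sperm_inj f₁ f₂ h₁ h₂ (hxeq.symm.trans (hfeq ▸ hyeq)))
    · -- σb x = P x and σb y has an equivalence; σb x = σb y
      rw [← hfeq, hxeq, htwist] at hr₂
      rw [htwist] at hr₂'
      exact WildAux.pair_neq f₁ f₂ h₁ h₂ hxy hr₂ hr₂' he₂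
    · rw [hfeq, hyeq, htwist] at hr₁
      rw [htwist] at hr₁'
      exact WildAux.pair_neq f₁ f₂ h₁ h₂ (Ne.symm hxy) hr₁ hr₁' he₁
    · rw [← hfeq] at hr₂
      have hgg : g₁ = g₂ := WildAux.rearr_unique (hufin (σb x)) hr₁ hr₂
      have he : FEquiv g₁' g₂' :=
        WildAux.fequiv_trans (WildAux.fequiv_symm he₁) (hgg ▸ he₂)
      rw [htwist] at hr₁' hr₂'
      exact WildAux.pair_neq f₁ f₂ h₁ h₂ hxy hr₁' hr₂' he
  obtain ⟨t, ht, hnb⟩ := hblock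
  have hnotin : P t ∉ S₀ := by
    intro hmem
    exact hnb ⟨P t, hmem, Or.inl rfl⟩
  refine ⟨P t, hnotin, ?_⟩
  intro σ₁ hσ₁ σ₂ hσ₂ hne g g' hg hg' he
  rcases Set.mem_insert_iff.1 hσ₁ with rfl | hσ₁ <;>
    rcases Set.mem_insert_iff.1 hσ₂ with h2 | hσ₂
  · exact hne h2.symm
  · exact hnb ⟨σ₂, hσ₂, Or.inr ⟨g', g, hg', hg, WildAux.fequiv_symm he⟩⟩
  · subst h2
    exact hnb ⟨σ₁, hσ₁, Or.inr ⟨g, g', hg, hg', he⟩⟩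
  · exact hwild σ₁ hσ₁ σ₂ hσ₂ hne g g' hg hg' he
end
end

section
/- Let f₁ and f₂ be admissible functions. Then there exists an injective sequence (σ_i)_{i∈ℕ} of permutations of ℕ such that for all i ≠ j the following holds: whenever τ and τ' are permutations of ℕ such that (f₁·(f₂∘σ_i))∘τ and (f₁·(f₂∘σ_j))∘τ' are both monotone nondecreasing, the functions (f₁·(f₂∘σ_i))∘τ and (f₁·(f₂∘σ_j))∘τ' are not equivalent. (That is, there exists an infinite (f₁,f₂)-wild set of permutations.) -/
noncomputable section

set_option linter.unusedSectionVars false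

namespace Wild

lemma unbdd {f : ℕ → ℝ} (h : Admissible f) (C : ℝ) : ∃ n, C < f n := by
  obtain ⟨y, ⟨n, rfl⟩, hy⟩ := not_bddAbove_iff.1 h.2.2 C
  exact ⟨n, hy⟩

variable (a b : ℕ → ℝ)

def q (n : ℕ) : ℝ := a n * b n

def stepP (M : ℕ) : ℕ := sInf {n | q a b M < q a b n}
def stepU (k M : ℕ) : ℝ := ((k : ℝ) + 1) * q a b (stepP a b M)
def stepB (k M : ℕ) : ℕ := sInf {n | stepU a b k M < q a b n}
def stepR (k M : ℕ) : ℕ :=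
  sInf {m | stepB a b k M ≤ m ∧ stepU a b k M < a m * b 0 ∧ stepU a b k M < a 0 * b m}

def M : ℕ → ℕ := fun k =>
  Nat.rec 0 (fun k Mk => stepR a b k Mk + (stepB a b k Mk - stepP a b Mk)) k

def P (k : ℕ) : ℕ := stepP a b (M a b k)
def U (k : ℕ) : ℝ := stepU a b k (M a b k)
def B (k : ℕ) : ℕ := stepB a b k (M a b k)
def R (k : ℕ) : ℕ := stepR a b k (M a b k)

lemma M_zero : M a b 0 = 0 := rfl
lemma M_succ (k : ℕ) : M a b (k+1) = R a b k + (B a b k - P a b k) := rfl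

def sw (k n : ℕ) : ℕ :=
  if P a b k ≤ n ∧ n < B a b k then R a b k + (n - P a b k)
  else if R a b k ≤ n ∧ n < R a b k + (B a b k - P a b k) then P a b k + (n - R a b k)
  else n

def gen (n : ℕ) : ℕ := sInf {k | n < M a b (k+1)}

def jj (k : ℕ) : ℕ := (Nat.unpair (Nat.unpair k).1).2
def ii (k : ℕ) : ℕ := (Nat.unpair (Nat.unpair k).1).1

def F (l n : ℕ) : ℕ := if jj (gen a b n) = l then n else sw a b (gen a b n) n

variable {a b}
variable (ha : Admissible a) (hb : Admissible b)
include ha hb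

lemma q_pos (n : ℕ) : 0 < q a b n := mul_pos (ha.1 n) (hb.1 n)

lemma q_mono : Monotone (q a b) := fun m n h =>
  mul_le_mul (ha.2.1 h) (hb.2.1 h) (hb.1 m).le (ha.1 n).le

lemma q_unbdd (C : ℝ) : ∃ n, C < q a b n := by
  obtain ⟨n, hn⟩ := unbdd ha (max C 0 / b 0)
  have hb0 : 0 < b 0 := hb.1 0
  have h1 : max C 0 < a n * b 0 := by
    have := (div_lt_iff₀ hb0).1 hn
    linarith
  refine ⟨n, ?_⟩
  calc C ≤ max C 0 := le_max_left _ _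
    _ < a n * b 0 := h1
    _ ≤ a n * b n := mul_le_mul_of_nonneg_left (hb.2.1 (Nat.zero_le n)) (ha.1 n).le

lemma q_lt_q_P (k : ℕ) : q a b (M a b k) < q a b (P a b k) :=
  Nat.sInf_mem (q_unbdd ha hb (q a b (M a b k)))

lemma q_le_of_lt_P {k n : ℕ} (h : n < P a b k) : q a b n ≤ q a b (M a b k) :=
  not_lt.1 (Nat.notMem_of_lt_sInf h)

lemma M_lt_P (k : ℕ) : M a b k < P a b k := by
  by_contra h
  push_neg at h
  exact absurd (q_lt_q_P ha hb k) (not_lt.2 (q_mono ha hb h))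

lemma qP_le_U (k : ℕ) : q a b (P a b k) ≤ U a b k := by
  have h1 : (0:ℝ) ≤ q a b (P a b k) := (q_pos ha hb _).le
  have h2 : (1:ℝ) ≤ (k : ℝ) + 1 := by
    have : (0:ℝ) ≤ (k:ℝ) := Nat.cast_nonneg k
    linarith
  exact le_mul_of_one_le_left h1 h2

lemma U_pos (k : ℕ) : 0 < U a b k :=
  lt_of_lt_of_le (q_pos ha hb _) (qP_le_U ha hb k)

lemma U_lt_q_B (k : ℕ) : U a b k < q a b (B a b k) :=
  Nat.sInf_mem (q_unbdd ha hb (U a b k))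

lemma q_le_U_of_lt_B {k n : ℕ} (h : n < B a b k) : q a b n ≤ U a b k :=
  not_lt.1 (Nat.notMem_of_lt_sInf h)

lemma U_lt_q_of_B_le {k n : ℕ} (h : B a b k ≤ n) : U a b k < q a b n :=
  lt_of_lt_of_le (U_lt_q_B ha hb k) (q_mono ha hb h)

lemma P_lt_B (k : ℕ) : P a b k < B a b k := by
  by_contra h
  push_neg at h
  have h1 : q a b (B a b k) ≤ q a b (P a b k) := q_mono ha hb h
  have h2 := U_lt_q_B ha hb k
  have h3 := qP_le_U ha hb k
  linarith

lemma R_spec (k : ℕ) : B a b k ≤ R a b k ∧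
    U a b k < a (R a b k) * b 0 ∧ U a b k < a 0 * b (R a b k) := by
  have ha0 : 0 < a 0 := ha.1 0
  have hb0 : 0 < b 0 := hb.1 0
  obtain ⟨m₁, hm₁⟩ := unbdd ha (U a b k / b 0)
  obtain ⟨m₂, hm₂⟩ := unbdd hb (U a b k / a 0)
  have hne : {m | B a b k ≤ m ∧ U a b k < a m * b 0 ∧ U a b k < a 0 * b m}.Nonempty := by
    refine ⟨max (B a b k) (max m₁ m₂), le_max_left _ _, ?_, ?_⟩
    · have h1 : U a b k < a m₁ * b 0 := (div_lt_iff₀ hb0).1 hm₁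
      have : a m₁ ≤ a (max (B a b k) (max m₁ m₂)) :=
        ha.2.1 (le_trans (le_max_left _ _) (le_max_right _ _))
      nlinarith
    · have h1 : U a b k < a 0 * b m₂ := by
        have := (div_lt_iff₀ ha0).1 hm₂
        linarith
      have : b m₂ ≤ b (max (B a b k) (max m₁ m₂)) :=
        hb.2.1 (le_trans (le_max_right _ _) (le_max_right _ _))
      nlinarith
  exact Nat.sInf_mem hne


lemma chain (k : ℕ) : M a b k < P a b k ∧ P a b k < B a b k ∧ B a b k ≤ R a b k ∧
    M a b (k+1) = R a b k + (B a b k - P a b k) :=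
  ⟨M_lt_P ha hb k, P_lt_B ha hb k, (R_spec ha hb k).1, M_succ a b k⟩

lemma M_lt_M_succ (k : ℕ) : M a b k < M a b (k+1) := by
  have h := chain ha hb k
  omega

lemma M_mono : StrictMono (M a b) := strictMono_nat_of_lt_succ (M_lt_M_succ ha hb)

lemma sw_invol (k : ℕ) : Function.Involutive (sw a b k) := by
  intro n
  have h := chain ha hb k
  simp only [sw]
  split_ifs <;> omega

lemma sw_mem {k n : ℕ} (h1 : M a b k ≤ n) (h2 : n < M a b (k+1)) :
    M a b k ≤ sw a b k n ∧ sw a b k n < M a b (k+1) := by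
  have h := chain ha hb k
  simp only [sw]
  split_ifs <;> omega

lemma sw_fix_low {k n : ℕ} (h2 : n < P a b k) : sw a b k n = n := by
  have h := chain ha hb k
  simp only [sw]
  split_ifs <;> omega

lemma sw_fix_mid {k n : ℕ} (h1 : B a b k ≤ n) (h2 : n < R a b k) : sw a b k n = n := by
  have h := chain ha hb k
  simp only [sw]
  split_ifs <;> omega

lemma sw_block1 {k n : ℕ} (h1 : P a b k ≤ n) (h2 : n < B a b k) :
    sw a b k n = R a b k + (n - P a b k) := by
  simp only [sw]
  split_ifs <;> omega

lemma sw_block2 {k n : ℕ} (h1 : R a b k ≤ n) (h2 : n < M a b (k+1)) :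
    sw a b k n = P a b k + (n - R a b k) := by
  have h := chain ha hb k
  simp only [sw]
  split_ifs <;> omega

lemma lt_M_gen_succ (n : ℕ) : n < M a b (gen a b n + 1) := by
  have : n < M a b (n+1) := lt_of_lt_of_le (Nat.lt_succ_self n) ((M_mono ha hb).le_apply)
  exact Nat.sInf_mem (⟨n, this⟩ : {k | n < M a b (k+1)}.Nonempty)

lemma M_gen_le (n : ℕ) : M a b (gen a b n) ≤ n := by
  rcases h : gen a b n with _ | k
  · simp [M_zero]
  · have hk : k < gen a b n := by omega
    have := Nat.notMem_of_lt_sInf hk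
    simp only [Set.mem_setOf_eq, not_lt] at this
    exact this

lemma gen_eq {k n : ℕ} (h1 : M a b k ≤ n) (h2 : n < M a b (k+1)) : gen a b n = k := by
  refine le_antisymm (Nat.sInf_le h2) ?_
  by_contra h
  push_neg at h
  have : gen a b n + 1 ≤ k := h
  have := (M_mono ha hb).monotone this
  have := lt_M_gen_succ ha hb n
  omega

lemma exists_gen_pair (i j K : ℕ) : ∃ k, K ≤ k ∧ ii k = i ∧ jj k = j :=
  ⟨Nat.pair (Nat.pair i j) K, Nat.right_le_pair _ _, by simp [ii, jj, Nat.unpair_pair]⟩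

lemma F_mem (l n : ℕ) :
    M a b (gen a b n) ≤ F a b l n ∧ F a b l n < M a b (gen a b n + 1) := by
  simp only [F]
  split_ifs
  · exact ⟨M_gen_le ha hb n, lt_M_gen_succ ha hb n⟩
  · exact sw_mem ha hb (M_gen_le ha hb n) (lt_M_gen_succ ha hb n)

lemma F_invol (l : ℕ) : Function.Involutive (F a b l) := by
  intro n
  by_cases h : jj (gen a b n) = l
  · simp [F, h]
  · have hg : gen a b (sw a b (gen a b n) n) = gen a b n :=
      gen_eq ha hb (sw_mem ha hb (M_gen_le ha hb n) (lt_M_gen_succ ha hb n)).1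
        (sw_mem ha hb (M_gen_le ha hb n) (lt_M_gen_succ ha hb n)).2
    have h1 : F a b l n = sw a b (gen a b n) n := if_neg h
    have h2 : F a b l (sw a b (gen a b n) n) = sw a b (gen a b n) (sw a b (gen a b n) n) := by
      simp only [F, hg]
      exact if_neg h
    rw [h1, h2]
    exact sw_invol ha hb _ n

def sig (l : ℕ) : Equiv.Perm ℕ := (F_invol ha hb l).toPerm

lemma sig_apply (l n : ℕ) : sig ha hb l n = F a b l n := rfl


lemma gen_lt {k n : ℕ} (h : n < M a b k) : gen a b n < k := by
  by_contra hc
  push_neg at hc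
  have := (M_mono ha hb).monotone hc
  have := M_gen_le ha hb n
  omega

lemma gen_ge {k n : ℕ} (h : M a b k ≤ n) : k ≤ gen a b n := by
  by_contra hc
  push_neg at hc
  have : gen a b n + 1 ≤ k := hc
  have := (M_mono ha hb).monotone this
  have := lt_M_gen_succ ha hb n
  omega

lemma val_lt_M {k l n : ℕ} (h : n < M a b k) :
    a n * b (F a b l n) ≤ q a b (M a b k) := by
  have hg : gen a b n + 1 ≤ k := gen_lt ha hb h
  have hF : F a b l n < M a b k :=
    lt_of_lt_of_le (F_mem ha hb l n).2 ((M_mono ha hb).monotone hg)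
  exact mul_le_mul (ha.2.1 h.le) (hb.2.1 hF.le) (hb.1 _).le (ha.1 _).le

lemma gen_eq_of_mem {k n : ℕ} (h1 : M a b k ≤ n) (h2 : n < M a b (k+1)) :
    gen a b n = k := gen_eq ha hb h1 h2

lemma val_low {k l n : ℕ} (h1 : M a b k ≤ n) (h2 : n < P a b k) :
    F a b l n = n ∧ q a b n ≤ q a b (M a b k) := by
  have hc := chain ha hb k
  have hg : gen a b n = k := gen_eq ha hb h1 (by omega)
  have hsw : sw a b k n = n := sw_fix_low ha hb h2
  constructor
  · simp only [F, hg]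
    split_ifs
    · rfl
    · exact hsw
  · exact q_le_of_lt_P ha hb h2

lemma val_block1 {k l n : ℕ} (h1 : P a b k ≤ n) (h2 : n < B a b k) (hl : jj k ≠ l) :
    U a b k < a n * b (F a b l n) := by
  have hc := chain ha hb k
  have hg : gen a b n = k := gen_eq ha hb (by omega) (by omega)
  have hF : F a b l n = R a b k + (n - P a b k) := by
    simp only [F, hg]
    rw [if_neg hl]
    exact sw_block1 ha hb h1 h2
  have h3 : a 0 * b (R a b k) ≤ a n * b (F a b l n) := by
    rw [hF]
    exact mul_le_mul (ha.2.1 (Nat.zero_le n)) (hb.2.1 (Nat.le_add_right _ _))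
      (hb.1 _).le (ha.1 _).le
  exact lt_of_lt_of_le (R_spec ha hb k).2.2 h3

lemma val_block2 {k l n : ℕ} (h1 : B a b k ≤ n) (h2 : n < R a b k) :
    U a b k < a n * b (F a b l n) := by
  have hc := chain ha hb k
  have hg : gen a b n = k := gen_eq ha hb (by omega) (by omega)
  have hF : F a b l n = n := by
    simp only [F, hg]
    split_ifs
    · rfl
    · exact sw_fix_mid ha hb h1 h2
  rw [hF]
  exact U_lt_q_of_B_le ha hb h1

lemma val_block3 {k l n : ℕ} (h1 : R a b k ≤ n) (h2 : n < M a b (k+1)) (hl : jj k ≠ l) :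
    U a b k < a n * b (F a b l n) := by
  have hc := chain ha hb k
  have hg : gen a b n = k := gen_eq ha hb (by omega) h2
  have hF : F a b l n = P a b k + (n - R a b k) := by
    simp only [F, hg]
    rw [if_neg hl]
    exact sw_block2 ha hb h1 h2
  have h3 : a (R a b k) * b 0 ≤ a n * b (F a b l n) := by
    rw [hF]
    exact mul_le_mul (ha.2.1 h1) (hb.2.1 (Nat.zero_le _)) (hb.1 _).le (ha.1 _).le
  exact lt_of_lt_of_le (R_spec ha hb k).2.1 h3

lemma val_high {k l n : ℕ} (h : M a b (k+1) ≤ n) :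
    U a b k < a n * b (F a b l n) := by
  have hc := chain ha hb k
  have hg : k + 1 ≤ gen a b n := gen_ge ha hb h
  have hn : R a b k ≤ n := le_trans (by omega) h
  have hF : 0 ≤ F a b l n := Nat.zero_le _
  have h3 : a (R a b k) * b 0 ≤ a n * b (F a b l n) :=
    mul_le_mul (ha.2.1 hn) (hb.2.1 (Nat.zero_le _)) (hb.1 _).le (ha.1 _).le
  exact lt_of_lt_of_le (R_spec ha hb k).2.1 h3

lemma key_active {k l : ℕ} (hl : jj k ≠ l) (n : ℕ) :
    a n * b (F a b l n) ≤ U a b k ↔ n < P a b k := by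
  have hc := chain ha hb k
  constructor
  · intro h
    by_contra hn
    push_neg at hn
    rcases lt_or_ge n (B a b k) with h2 | h2
    · exact absurd h (not_le.2 (val_block1 ha hb hn h2 hl))
    rcases lt_or_ge n (R a b k) with h3 | h3
    · exact absurd h (not_le.2 (val_block2 ha hb h2 h3))
    rcases lt_or_ge n (M a b (k+1)) with h4 | h4
    · exact absurd h (not_le.2 (val_block3 ha hb h3 h4 hl))
    · exact absurd h (not_le.2 (val_high ha hb h4))
  · intro h
    have hMU : q a b (M a b k) ≤ U a b k :=
      le_trans (q_mono ha hb (M_lt_P ha hb k).le) (qP_le_U ha hb k)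
    rcases lt_or_ge n (M a b k) with h1 | h1
    · exact le_trans (val_lt_M ha hb h1) hMU
    · obtain ⟨hF, hq⟩ := val_low ha hb h1 h
      rw [hF]
      exact le_trans hq hMU

lemma key_passive {k n : ℕ} (h : n ≤ P a b k) :
    a n * b (F a b (jj k) n) ≤ q a b (P a b k) := by
  have hc := chain ha hb k
  rcases lt_or_ge n (M a b k) with h1 | h1
  · exact le_trans (val_lt_M ha hb h1) (q_mono ha hb (M_lt_P ha hb k).le)
  · have hg : gen a b n = k := gen_eq ha hb h1 (by omega)
    have hF : F a b (jj k) n = n := by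
      simp only [F, hg, if_pos rfl]
      simp
    rw [hF]
    exact q_mono ha hb h


omit ha hb in
lemma sorted_gt {g : ℕ → ℝ} {τ : Equiv.Perm ℕ} (hm : Monotone fun n => g (τ n))
    {Pn : ℕ} {Uv : ℝ} (hcard : ∀ n, g n ≤ Uv ↔ n < Pn) : Uv < g (τ Pn) := by
  by_contra hcon
  push_neg at hcon
  have hsub : ∀ m ∈ Finset.range (Pn+1), τ m ∈ Finset.range Pn := by
    intro m hmem
    have hmP : m ≤ Pn := by
      have := Finset.mem_range.1 hmem
      omega
    have : g (τ m) ≤ Uv := le_trans (hm hmP) hcon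
    exact Finset.mem_range.2 ((hcard _).1 this)
  have hcle := Finset.card_le_card_of_injOn τ hsub (τ.injective.injOn)
  simp only [Finset.card_range] at hcle
  omega

omit ha hb in
lemma sorted_le {g : ℕ → ℝ} {τ : Equiv.Perm ℕ} (hm : Monotone fun n => g (τ n))
    {Pn : ℕ} {Wv : ℝ} (h : ∀ n ≤ Pn, g n ≤ Wv) : g (τ Pn) ≤ Wv := by
  obtain ⟨m, hm1, hm2⟩ : ∃ m, Pn ≤ m ∧ τ m ≤ Pn := by
    by_contra hc
    push_neg at hc
    have hsub : ∀ x ∈ Finset.range (Pn+1), τ.symm x ∈ Finset.range Pn := by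
      intro x hx
      rw [Finset.mem_range]
      by_contra hxx
      push_neg at hxx
      have h1 : Pn ≤ τ.symm x := hxx
      have h2 := hc _ h1
      rw [Equiv.apply_symm_apply] at h2
      have := Finset.mem_range.1 hx
      omega
    have hcle := Finset.card_le_card_of_injOn _ hsub (τ.symm.injective.injOn)
    simp only [Finset.card_range] at hcle
    omega
  exact le_trans (hm hm1) (h _ hm2)

end Wild

open Wild

/-- For admissible `f₁, f₂` there exists an infinite `(f₁,f₂)`-wild set of
permutations: an injective sequence `σ_i` of permutations such that for
`i ≠ j` the monotone rearrangements of `f₁·(f₂∘σ_i)` and `f₁·(f₂∘σ_j)` are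
never equivalent. -/
theorem exists_infinite_wild_set (f₁ f₂ : ℕ → ℝ)
    (h₁ : Admissible f₁) (h₂ : Admissible f₂) :
    ∃ σ : ℕ → Equiv.Perm ℕ, Function.Injective σ ∧
      ∀ i j, i ≠ j → ∀ τ τ' : Equiv.Perm ℕ,
        Monotone (fun n => f₁ (τ n) * f₂ (σ i (τ n))) →
        Monotone (fun n => f₁ (τ' n) * f₂ (σ j (τ' n))) →
        ¬ FEquiv (fun n => f₁ (τ n) * f₂ (σ i (τ n)))
            (fun n => f₁ (τ' n) * f₂ (σ j (τ' n))) := by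
  refine ⟨fun l => sig h₁ h₂ l, ?_, ?_⟩
  · intro i j hij
    by_contra hne
    obtain ⟨k, -, hii, hjj⟩ := exists_gen_pair h₁ h₂ i j 0
    have hc := chain h₁ h₂ k
    have hg : gen f₁ f₂ (P f₁ f₂ k) = k :=
      gen_eq h₁ h₂ (by omega) (by omega)
    have hi : sig h₁ h₂ i (P f₁ f₂ k) = R f₁ f₂ k := by
      rw [sig_apply]
      simp only [F, hg]
      rw [if_neg (by rw [hjj]; exact fun e => hne e.symm)]
      rw [sw_block1 h₁ h₂ le_rfl (by omega)]
      omega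
    have hj : sig h₁ h₂ j (P f₁ f₂ k) = P f₁ f₂ k := by
      rw [sig_apply]
      simp only [F, hg, hjj, if_pos rfl]
      simp
    have heq : sig h₁ h₂ i (P f₁ f₂ k) = sig h₁ h₂ j (P f₁ f₂ k) := by
      simp only at hij
      rw [hij]
    rw [hi, hj] at heq
    omega
  · intro i j hij τ τ' hmono hmono' hFE
    obtain ⟨c, hc0, hFE⟩ := hFE
    obtain ⟨K, hK⟩ := exists_nat_ge c
    obtain ⟨k, hKk, hii, hjj⟩ := exists_gen_pair h₁ h₂ i j K
    have hjne : jj k ≠ i := by rw [hjj]; exact fun e => hij e.symm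
    have hkey := key_active h₁ h₂ hjne
    have hi : U f₁ f₂ k < f₁ (τ (P f₁ f₂ k)) * f₂ (F f₁ f₂ i (τ (P f₁ f₂ k))) :=
      sorted_gt (g := fun n => f₁ n * f₂ (F f₁ f₂ i n)) hmono hkey
    have hj : f₁ (τ' (P f₁ f₂ k)) * f₂ (F f₁ f₂ j (τ' (P f₁ f₂ k))) ≤ q f₁ f₂ (P f₁ f₂ k) := by
      refine sorted_le (g := fun n => f₁ n * f₂ (F f₁ f₂ j n)) hmono' ?_
      intro n hn
      have := key_passive h₁ h₂ (k := k) (n := n) hn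
      rw [hjj] at this
      exact this
    have h1 := (hFE (P f₁ f₂ k)).1
    set x := f₁ (τ (P f₁ f₂ k)) * f₂ (F f₁ f₂ i (τ (P f₁ f₂ k))) with hx
    set y := f₁ (τ' (P f₁ f₂ k)) * f₂ (F f₁ f₂ j (τ' (P f₁ f₂ k))) with hy
    have h1' : (1 / c) * x ≤ y := h1
    have hqP : 0 < q f₁ f₂ (P f₁ f₂ k) := q_pos h₁ h₂ _
    have hUeq : U f₁ f₂ k = ((k : ℝ) + 1) * q f₁ f₂ (P f₁ f₂ k) := rfl
    have hkc : c ≤ (k : ℝ) := le_trans hK (by exact_mod_cast hKk)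
    have hxc : x ≤ c * y := by
      have := mul_le_mul_of_nonneg_left h1' hc0.le
      rw [← mul_assoc, mul_one_div, div_self hc0.ne', one_mul] at this
      exact this
    nlinarith [hi, hj, hxc, hqP, hkc, hc0]
end
end

section
/- Let f₁ and f₂ be admissible functions. Then there exists a sequence (g_i)_{i∈ℕ} of admissible functions, pairwise non-equivalent, such that for each i there exists a permutation σ of ℕ with the following properties: (i) g_i is a monotone rearrangement of f₁·(f₂∘σ); (ii) there is a surjective linear isometry ℓ²_{f₁} → ℓ² mapping ℓ²_{f₁·(f₂∘σ)} isometrically onto ℓ²_{f₂}, so the pair (ℓ²_{f₁}, ℓ²_{f₁·(f₂∘σ)}) is scale isometric to (ℓ², ℓ²_{f₂}); and (iii) there is a surjective linear isometry ℓ² → ℓ² mapping ℓ²_{g_i} isometrically onto ℓ²_{f₁·(f₂∘σ)}, so the pair (ℓ², ℓ²_{f₁·(f₂∘σ)}) is scale isometric to (ℓ², ℓ²_{g_i}). In particular, the scale Hilbert triple ℓ² ⊇ ℓ²_{f₁} ⊇ ℓ²_{f₁·(f₂∘σ)} realizes the triple of invariants ([f₁], [f₂], [g_i]), and infinitely many pairwise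 non-equivalent classes [g_i] are realized this way. -/
noncomputable section

/-- A surjective linear isometry of pairs `(ℓ²_f, ℓ²_g) → (ℓ²_{f'}, ℓ²_{g'})`:
a linear map of sequences restricting to norm-preserving bijections
`ℓ²_f → ℓ²_{f'}` and `ℓ²_g → ℓ²_{g'}`. -/
def ScaleIsometryPair (f g f' g' : ℕ → ℝ) : Prop :=
  ∃ T : (ℕ → ℝ) →ₗ[ℝ] (ℕ → ℝ),
    Set.BijOn T {x | MemW f x} {x | MemW f' x} ∧
    (∀ x, MemW f x → wNorm f' (T x) = wNorm f x) ∧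
    Set.BijOn T {x | MemW g x} {x | MemW g' x} ∧
    (∀ x, MemW g x → wNorm g' (T x) = wNorm g x)

namespace RealizeAux

open Filter

lemma list_not_mem_sum (l : List ℕ) : l.sum + 1 ∉ l := by
  intro h
  have := List.single_le_sum (fun x _ => Nat.zero_le x) _ h
  omega

lemma fresh_exists (l : List ℕ) : ∃ m, m ∉ l := ⟨l.sum + 1, list_not_mem_sum l⟩

lemma exists_fresh_big {b : ℕ → ℝ} (hmono : Monotone b)
    (hub : ¬ BddAbove (Set.range b)) (l : List ℕ) (c : ℝ) :
    ∃ m, m ∉ l ∧ c ≤ b m := by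
  rw [not_bddAbove_iff] at hub
  obtain ⟨y, hy, hM⟩ := hub c
  obtain ⟨M, rfl⟩ := hy
  refine ⟨M + l.sum + 1, ?_, ?_⟩
  · intro hmem
    have := List.single_le_sum (fun x _ => Nat.zero_le x) _ hmem
    omega
  · exact hM.le.trans (hmono (by omega))

section BF

variable (a b h : ℕ → ℝ)
variable (ha : Admissible a) (hb : Admissible b)

def nextPair (t : ℕ) (l : List (ℕ × ℕ)) : ℕ × ℕ :=
  if Even t then
    let x := Nat.find (fresh_exists (l.map Prod.fst))
    (x, Classical.choose (exists_fresh_big hb.2.1 hb.2.2 (l.map Prod.snd) (h t / a x)))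
  else
    let y := Nat.find (fresh_exists (l.map Prod.snd))
    (Classical.choose (exists_fresh_big ha.2.1 ha.2.2 (l.map Prod.fst) (h t / b y)), y)

def bfList : ℕ → List (ℕ × ℕ)
  | 0 => []
  | t + 1 => bfList t ++ [nextPair a b h ha hb t (bfList t)]

def bfX (t : ℕ) : ℕ := (nextPair a b h ha hb t (bfList a b h ha hb t)).1
def bfY (t : ℕ) : ℕ := (nextPair a b h ha hb t (bfList a b h ha hb t)).2

lemma bfList_eq (t : ℕ) :
    bfList a b h ha hb t
      = (List.range t).map (fun s => (bfX a b h ha hb s, bfY a b h ha hb s)) := by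
  induction t with
  | zero => rfl
  | succ t ih =>
    have hstep : bfList a b h ha hb (t+1)
        = bfList a b h ha hb t ++ [(bfX a b h ha hb t, bfY a b h ha hb t)] := rfl
    rw [hstep, ih, List.range_succ, List.map_append]
    rfl

lemma bf_step (t : ℕ) :
    bfX a b h ha hb t ∉ (bfList a b h ha hb t).map Prod.fst ∧
    bfY a b h ha hb t ∉ (bfList a b h ha hb t).map Prod.snd ∧
    h t ≤ a (bfX a b h ha hb t) * b (bfY a b h ha hb t) ∧
    (Even t → ∀ m, m ∉ (bfList a b h ha hb t).map Prod.fst → bfX a b h ha hb t ≤ m) ∧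
    (¬ Even t → ∀ m, m ∉ (bfList a b h ha hb t).map Prod.snd → bfY a b h ha hb t ≤ m) := by
  by_cases ht : Even t
  · have hx : bfX a b h ha hb t
        = Nat.find (fresh_exists ((bfList a b h ha hb t).map Prod.fst)) := by
      simp only [bfX, nextPair, if_pos ht]
    have hy : bfY a b h ha hb t
        = Classical.choose (exists_fresh_big hb.2.1 hb.2.2
            ((bfList a b h ha hb t).map Prod.snd)
            (h t / a (Nat.find (fresh_exists ((bfList a b h ha hb t).map Prod.fst))))) := by
      simp only [bfY, nextPair, if_pos ht]
    have hspec := Classical.choose_spec (exists_fresh_big hb.2.1 hb.2.2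
            ((bfList a b h ha hb t).map Prod.snd)
            (h t / a (Nat.find (fresh_exists ((bfList a b h ha hb t).map Prod.fst)))))
    rw [hx, hy]
    refine ⟨Nat.find_spec (fresh_exists _), hspec.1, ?_, ?_, fun h' => absurd ht h'⟩
    · have h2 := hspec.2
      rw [div_le_iff₀ (ha.1 _)] at h2
      linarith [h2]
    · intro _ m hm
      exact Nat.find_min' _ hm
  · have hy : bfY a b h ha hb t
        = Nat.find (fresh_exists ((bfList a b h ha hb t).map Prod.snd)) := by
      simp only [bfY, nextPair, if_neg ht]
    have hx : bfX a b h ha hb t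
        = Classical.choose (exists_fresh_big ha.2.1 ha.2.2
            ((bfList a b h ha hb t).map Prod.fst)
            (h t / b (Nat.find (fresh_exists ((bfList a b h ha hb t).map Prod.snd))))) := by
      simp only [bfX, nextPair, if_neg ht]
    have hspec := Classical.choose_spec (exists_fresh_big ha.2.1 ha.2.2
            ((bfList a b h ha hb t).map Prod.fst)
            (h t / b (Nat.find (fresh_exists ((bfList a b h ha hb t).map Prod.snd)))))
    rw [hx, hy]
    refine ⟨hspec.1, Nat.find_spec (fresh_exists _), ?_, fun h' => absurd h' ht, ?_⟩
    · have h2 := hspec.2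
      rw [div_le_iff₀ (hb.1 _)] at h2
      linarith [h2]
    · intro _ m hm
      exact Nat.find_min' _ hm

lemma bfX_inj : Function.Injective (bfX a b h ha hb) := by
  have key : ∀ s t, s < t → bfX a b h ha hb s ≠ bfX a b h ha hb t := by
    intro s t hst heq
    apply (bf_step a b h ha hb t).1
    rw [bfList_eq, List.map_map]
    exact List.mem_map.mpr ⟨s, List.mem_range.mpr hst, by simp [heq]⟩
  intro s t heq
  rcases lt_trichotomy s t with hlt | he | hlt
  · exact absurd heq (key s t hlt)
  · exact he
  · exact absurd heq.symm (key t s hlt)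

lemma bfY_inj : Function.Injective (bfY a b h ha hb) := by
  have key : ∀ s t, s < t → bfY a b h ha hb s ≠ bfY a b h ha hb t := by
    intro s t hst heq
    apply (bf_step a b h ha hb t).2.1
    rw [bfList_eq, List.map_map]
    exact List.mem_map.mpr ⟨s, List.mem_range.mpr hst, by simp [heq]⟩
  intro s t heq
  rcases lt_trichotomy s t with hlt | he | hlt
  · exact absurd heq (key s t hlt)
  · exact he
  · exact absurd heq.symm (key t s hlt)

lemma bfX_surj : Function.Surjective (bfX a b h ha hb) := by
  intro m
  by_contra hm
  push_neg at hm
  have hnot : ∀ t, m ∉ (bfList a b h ha hb t).map Prod.fst := by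
    intro t hmem
    rw [bfList_eq, List.map_map] at hmem
    obtain ⟨s, _, hs⟩ := List.mem_map.mp hmem
    exact hm s hs
  have hle : ∀ k : ℕ, bfX a b h ha hb (2 * k) ≤ m := fun k =>
    ((bf_step a b h ha hb (2 * k)).2.2.2.1 (even_two_mul k)) m (hnot _)
  have hinj : Function.Injective (fun k => bfX a b h ha hb (2 * k)) := by
    intro k₁ k₂ he
    have := bfX_inj a b h ha hb he
    omega
  have hInf : (Set.Iic m).Infinite :=
    Set.infinite_of_injective_forall_mem hinj (fun k => hle k)
  exact hInf (Set.finite_Iic m)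

lemma bfY_surj : Function.Surjective (bfY a b h ha hb) := by
  intro m
  by_contra hm
  push_neg at hm
  have hnot : ∀ t, m ∉ (bfList a b h ha hb t).map Prod.snd := by
    intro t hmem
    rw [bfList_eq, List.map_map] at hmem
    obtain ⟨s, _, hs⟩ := List.mem_map.mp hmem
    exact hm s hs
  have hodd : ∀ k : ℕ, ¬ Even (2 * k + 1) := by
    intro k
    simp [Nat.even_add_one, Nat.even_mul]
  have hle : ∀ k : ℕ, bfY a b h ha hb (2 * k + 1) ≤ m := fun k =>
    ((bf_step a b h ha hb (2 * k + 1)).2.2.2.2 (hodd k)) m (hnot _)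
  have hinj : Function.Injective (fun k => bfY a b h ha hb (2 * k + 1)) := by
    intro k₁ k₂ he
    have := bfY_inj a b h ha hb he
    omega
  have hInf : (Set.Iic m).Infinite :=
    Set.infinite_of_injective_forall_mem hinj (fun k => hle k)
  exact hInf (Set.finite_Iic m)

lemma lemmaA (ha : Admissible a) (hb : Admissible b) :
    ∃ σ ι : Equiv.Perm ℕ, ∀ t, h t ≤ a (ι t) * b (σ (ι t)) := by
  let X : Equiv.Perm ℕ :=
    Equiv.ofBijective _ ⟨bfX_inj a b h ha hb, bfX_surj a b h ha hb⟩
  let Y : Equiv.Perm ℕ :=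
    Equiv.ofBijective _ ⟨bfY_inj a b h ha hb, bfY_surj a b h ha hb⟩
  refine ⟨X.symm.trans Y, X, fun t => ?_⟩
  have h2 : (X.symm.trans Y) (X t) = Y t := by
    rw [Equiv.trans_apply, Equiv.symm_apply_apply]
  rw [h2]
  have h1 : X t = bfX a b h ha hb t := rfl
  have h3 : Y t = bfY a b h ha hb t := rfl
  rw [h1, h3]
  exact (bf_step a b h ha hb t).2.2.1

end BF

lemma exists_argmin (u : ℕ → ℝ) (hu : Tendsto u atTop atTop) (l : List ℕ) : ∃ m, m ∉ l ∧ ∀ k, k ∉ l → u m ≤ u k := by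
  obtain ⟨N, hN⟩ := Filter.eventually_atTop.mp (hu.eventually (Filter.eventually_gt_atTop (u (l.sum + 1))))
  have hs₀ : l.sum + 1 ∉ l := list_not_mem_sum l
  have hAne : l.sum + 1 ∈ (insert (l.sum + 1) (Finset.range N)).filter (fun m => m ∉ l) := by
    simp [hs₀]
  obtain ⟨m, hmA, hmin⟩ := Finset.exists_min_image _ u ⟨_, hAne⟩
  have hmA' := Finset.mem_filter.mp hmA
  refine ⟨m, hmA'.2, fun k hk => ?_⟩
  by_cases hkN : k < N
  · exact hmin k (by simp [Finset.mem_filter, Finset.mem_insert, Finset.mem_range, hk, hkN])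
  · have hle : u m ≤ u (l.sum + 1) := hmin _ hAne
    have hlt : u (l.sum + 1) < u k := hN k (by omega)
    linarith

section Sorting

variable (u : ℕ → ℝ) (hu : Tendsto u atTop atTop)

def sortList : ℕ → List ℕ
  | 0 => []
  | n + 1 => sortList n ++ [Classical.choose (exists_argmin u hu (sortList n))]

def sortTau (n : ℕ) : ℕ := Classical.choose (exists_argmin u hu (sortList u hu n))

lemma sortTau_spec (n : ℕ) :
    sortTau u hu n ∉ sortList u hu n ∧
    ∀ k, k ∉ sortList u hu n → u (sortTau u hu n) ≤ u k :=
  Classical.choose_spec (exists_argmin u hu (sortList u hu n))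

lemma sortList_eq (n : ℕ) : sortList u hu n = (List.range n).map (sortTau u hu) := by
  induction n with
  | zero => rfl
  | succ n ih =>
    have hstep : sortList u hu (n + 1) = sortList u hu n ++ [sortTau u hu n] := rfl
    rw [hstep, ih, List.range_succ, List.map_append]
    rfl

lemma sortTau_mono : Monotone (fun n => u (sortTau u hu n)) := by
  apply monotone_nat_of_le_succ
  intro n
  apply (sortTau_spec u hu n).2
  intro hmem
  apply (sortTau_spec u hu (n + 1)).1
  have hstep : sortList u hu (n + 1) = sortList u hu n ++ [sortTau u hu n] := rfl
  rw [hstep]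
  exact List.mem_append_left _ hmem

lemma sortTau_inj : Function.Injective (sortTau u hu) := by
  have key : ∀ s t, s < t → sortTau u hu s ≠ sortTau u hu t := by
    intro s t hst heq
    apply (sortTau_spec u hu t).1
    rw [sortList_eq]
    exact List.mem_map.mpr ⟨s, List.mem_range.mpr hst, heq⟩
  intro s t heq
  rcases lt_trichotomy s t with hlt | he | hlt
  · exact absurd heq (key s t hlt)
  · exact he
  · exact absurd heq.symm (key t s hlt)

lemma sortTau_surj : Function.Surjective (sortTau u hu) := by
  intro m
  by_contra hm
  push_neg at hm
  have hnot : ∀ n, m ∉ sortList u hu n := by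
    intro n hmem
    rw [sortList_eq] at hmem
    obtain ⟨s, _, hs⟩ := List.mem_map.mp hmem
    exact hm s hs
  have hle : ∀ n, u (sortTau u hu n) ≤ u m := fun n => (sortTau_spec u hu n).2 m (hnot n)
  obtain ⟨N, hN⟩ := Filter.eventually_atTop.mp (hu.eventually (Filter.eventually_gt_atTop (u m)))
  have hlt : ∀ n, sortTau u hu n ∈ Set.Iio N := by
    intro n
    by_contra hge
    simp only [Set.mem_Iio, not_lt] at hge
    exact absurd (hle n) (not_le.mpr (hN _ hge))
  exact (Set.infinite_of_injective_forall_mem (sortTau_inj u hu) hlt) (Set.finite_Iio N)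

end Sorting

lemma exists_sort (u : ℕ → ℝ) (hu : Tendsto u atTop atTop) :
    ∃ τ : Equiv.Perm ℕ, Monotone (fun n => u (τ n)) :=
  ⟨Equiv.ofBijective _ ⟨sortTau_inj u hu, sortTau_surj u hu⟩, sortTau_mono u hu⟩

lemma sorted_ge (u g h : ℕ → ℝ) (τ ι : Equiv.Perm ℕ)
    (hg : ∀ n, g n = u (τ n)) (hgmono : Monotone g) (hh : Monotone h)
    (hι : ∀ t, h t ≤ u (ι t)) : ∀ n, h n ≤ g n := by
  intro n
  by_contra hlt
  push_neg at hlt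
  have key : ∀ m : ℕ, m ≤ n → ι.symm (τ m) < n := by
    intro m hm
    by_contra hge
    push_neg at hge
    have h1 : h (ι.symm (τ m)) ≤ u (ι (ι.symm (τ m))) := hι _
    rw [Equiv.apply_symm_apply] at h1
    have h2 : h n ≤ h (ι.symm (τ m)) := hh hge
    have h3 : g m ≤ g n := hgmono hm
    have h4 : g m = u (τ m) := hg m
    linarith
  have hinj : Function.Injective
      (fun m : Fin (n + 1) => (⟨ι.symm (τ m), key m (Nat.lt_succ_iff.mp m.2)⟩ : Fin n)) := by
    intro m₁ m₂ he
    have : ι.symm (τ (m₁ : ℕ)) = ι.symm (τ (m₂ : ℕ)) := congrArg Fin.val he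
    have := τ.injective (ι.symm.injective this)
    exact Fin.ext this
  have := Fintype.card_le_of_injective _ hinj
  simp only [Fintype.card_fin] at this
  omega

def scaleT (s : ℕ → ℝ) (e : Equiv.Perm ℕ) : (ℕ → ℝ) →ₗ[ℝ] (ℕ → ℝ) where
  toFun x := fun n => s (e.symm n) * x (e.symm n)
  map_add' x y := by funext n; simp [mul_add]
  map_smul' c x := by funext n; simp [smul_eq_mul]; ring

lemma scaleT_apply (s : ℕ → ℝ) (e : Equiv.Perm ℕ) (x : ℕ → ℝ) (n : ℕ) :
    scaleT s e x n = s (e.symm n) * x (e.symm n) := rfl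

lemma scaleT_summand {w w' s : ℕ → ℝ} {e : Equiv.Perm ℕ}
    (cond : ∀ m, w' (e m) * s m ^ 2 = w m) (x : ℕ → ℝ) (n : ℕ) :
    w' n * (scaleT s e x n) ^ 2 = w (e.symm n) * x (e.symm n) ^ 2 := by
  have hc := cond (e.symm n)
  rw [Equiv.apply_symm_apply] at hc
  rw [scaleT_apply, mul_pow, ← mul_assoc, hc]

lemma memW_scaleT {w w' s : ℕ → ℝ} {e : Equiv.Perm ℕ}
    (cond : ∀ m, w' (e m) * s m ^ 2 = w m) (x : ℕ → ℝ) :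
    MemW w' (scaleT s e x) ↔ MemW w x := by
  unfold MemW
  have he : (fun n => w' n * (scaleT s e x n) ^ 2)
      = (fun m => w m * x m ^ 2) ∘ e.symm := funext (scaleT_summand cond x)
  rw [he]
  exact e.symm.summable_iff

lemma wNorm_scaleT {w w' s : ℕ → ℝ} {e : Equiv.Perm ℕ}
    (cond : ∀ m, w' (e m) * s m ^ 2 = w m) (x : ℕ → ℝ) :
    wNorm w' (scaleT s e x) = wNorm w x := by
  unfold wNorm
  congr 1
  have he : (fun n => w' n * (scaleT s e x n) ^ 2)
      = (fun m => w m * x m ^ 2) ∘ e.symm := funext (scaleT_summand cond x)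
  rw [he]
  exact e.symm.tsum_eq (fun m => w m * x m ^ 2)

lemma bijOn_scaleT {w w' s : ℕ → ℝ} {e : Equiv.Perm ℕ} (hs : ∀ n, s n ≠ 0)
    (cond : ∀ m, w' (e m) * s m ^ 2 = w m) :
    Set.BijOn (scaleT s e) {x | MemW w x} {x | MemW w' x} := by
  refine ⟨fun x hx => (memW_scaleT cond x).mpr hx, ?_, ?_⟩
  · apply Function.Injective.injOn
    intro x y hxy
    funext m
    have hc := congrFun hxy (e m)
    rw [scaleT_apply, scaleT_apply, Equiv.symm_apply_apply] at hc
    exact mul_left_cancel₀ (hs m) hc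
  · intro y hy
    refine ⟨fun m => y (e m) / s m, ?_, ?_⟩
    · show MemW w _
      unfold MemW
      have he : (fun m => w m * (y (e m) / s m) ^ 2)
          = (fun n => w' n * y n ^ 2) ∘ e := by
        funext m
        show w m * (y (e m) / s m) ^ 2 = w' (e m) * y (e m) ^ 2
        have hsq : s m ^ 2 ≠ 0 := pow_ne_zero _ (hs m)
        rw [← cond m, div_pow, mul_assoc,
          mul_comm (s m ^ 2) (y (e m) ^ 2 / s m ^ 2), div_mul_cancel₀ _ hsq]
      rw [he]
      exact e.summable_iff.mpr hy
    · funext n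
      rw [scaleT_apply, Equiv.apply_symm_apply, mul_comm, div_mul_cancel₀ _ (hs _)]

lemma scalePair_of (w₁ w₂ w₁' w₂' s : ℕ → ℝ) (e : Equiv.Perm ℕ)
    (hs : ∀ n, s n ≠ 0)
    (c1 : ∀ m, w₁' (e m) * s m ^ 2 = w₁ m)
    (c2 : ∀ m, w₂' (e m) * s m ^ 2 = w₂ m) :
    ScaleIsometryPair w₁ w₂ w₁' w₂' :=
  ⟨scaleT s e, bijOn_scaleT hs c1, fun x _ => wNorm_scaleT c1 x,
    bijOn_scaleT hs c2, fun x _ => wNorm_scaleT c2 x⟩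


lemma main_step (f₁ f₂ : ℕ → ℝ) (h₁ : Admissible f₁) (h₂ : Admissible f₂)
    (h : ℕ → ℝ) (hh : Monotone h) :
    ∃ (gg : ℕ → ℝ) (σ : Equiv.Perm ℕ),
      Admissible gg ∧ (∀ n, h n ≤ gg n) ∧
      IsMonoRearrange (twist f₁ f₂ σ) gg ∧
      ScaleIsometryPair f₁ (twist f₁ f₂ σ) (fun _ => 1) f₂ ∧
      ScaleIsometryPair (fun _ => 1) gg (fun _ => 1) (twist f₁ f₂ σ) := by
  obtain ⟨σ, ι, hσι⟩ := lemmaA f₁ f₂ h h₁ h₂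
  set u := twist f₁ f₂ σ with hu_def
  have hupos : ∀ n, 0 < u n := fun n => mul_pos (h₁.1 n) (h₂.1 (σ n))
  have hf₁top : Tendsto f₁ atTop atTop := by
    apply tendsto_atTop_atTop_of_monotone h₁.2.1
    intro c
    obtain ⟨y, hy, hcy⟩ := not_bddAbove_iff.mp h₁.2.2 c
    obtain ⟨m, rfl⟩ := hy
    exact ⟨m, hcy.le⟩
  have hutop : Tendsto u atTop atTop := by
    apply tendsto_atTop_mono (f := fun n => f₁ n * f₂ 0) ?_ (hf₁top.atTop_mul_const (h₂.1 0))
    intro n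
    exact mul_le_mul_of_nonneg_left (h₂.2.1 (Nat.zero_le (σ n))) (h₁.1 n).le
  obtain ⟨τ, hτmono⟩ := exists_sort u hutop
  refine ⟨fun n => u (τ n), σ, ⟨fun n => hupos _, hτmono, ?_⟩, ?_, ⟨τ, fun n => rfl, hτmono⟩,
    ?_, ?_⟩
  · intro hbdd
    obtain ⟨c, hc⟩ := hbdd
    obtain ⟨n, hn⟩ := (hutop.eventually (Filter.eventually_gt_atTop c)).exists
    have h5 : u (τ (τ.symm n)) ≤ c := hc ⟨τ.symm n, rfl⟩
    rw [Equiv.apply_symm_apply] at h5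
    linarith
  · exact sorted_ge u _ h τ ι (fun n => rfl) hτmono hh hσι
  · apply scalePair_of f₁ (twist f₁ f₂ σ) (fun _ => 1) f₂ (fun m => Real.sqrt (f₁ m)) σ
    · exact fun n => ne_of_gt (Real.sqrt_pos.mpr (h₁.1 n))
    · intro m
      rw [one_mul, Real.sq_sqrt (h₁.1 m).le]
    · intro m
      rw [Real.sq_sqrt (h₁.1 m).le]
      exact mul_comm _ _
  · apply scalePair_of (fun _ => 1) (fun n => u (τ n)) (fun _ => 1) (twist f₁ f₂ σ)
      (fun _ => 1) τ
    · exact fun _ => one_ne_zero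
    · intro m; norm_num
    · intro m; rw [one_pow, mul_one]

def Good (f₁ f₂ gg : ℕ → ℝ) : Prop :=
  Admissible gg ∧ ∃ σ : Equiv.Perm ℕ,
    IsMonoRearrange (twist f₁ f₂ σ) gg ∧
    ScaleIsometryPair f₁ (twist f₁ f₂ σ) (fun _ => 1) f₂ ∧
    ScaleIsometryPair (fun _ => 1) gg (fun _ => 1) (twist f₁ f₂ σ)

lemma step_exists (f₁ f₂ : ℕ → ℝ) (h₁ : Admissible f₁) (h₂ : Admissible f₂)
    (l : List (ℕ → ℝ)) (hl : ∀ gg ∈ l, Admissible gg) :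
    ∃ gg, Good f₁ f₂ gg ∧
      ∀ n : ℕ, ((n : ℝ) + 1) * (1 + (l.map (fun p => p n)).sum) ≤ gg n := by
  have hnn : ∀ n : ℕ, (0:ℝ) ≤ (l.map (fun p => p n)).sum := by
    intro n
    apply List.sum_nonneg
    intro x hx
    obtain ⟨p, hp, rfl⟩ := List.mem_map.mp hx
    exact ((hl p hp).1 n).le
  have hmono : Monotone (fun n : ℕ => ((n : ℝ) + 1) * (1 + (l.map (fun p => p n)).sum)) := by
    apply Monotone.mul
    · intro x y hxy
      have : (x : ℝ) ≤ (y : ℝ) := by exact_mod_cast hxy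
      show (x : ℝ) + 1 ≤ (y : ℝ) + 1
      linarith
    · intro x y hxy
      have hsum : ((l.map (fun p => p x)).sum : ℝ) ≤ (l.map (fun p => p y)).sum := by
        apply List.sum_le_sum
        intro p hp
        exact (hl p hp).2.1 hxy
      show (1 : ℝ) + (l.map (fun p => p x)).sum ≤ 1 + (l.map (fun p => p y)).sum
      linarith
    · intro n
      positivity
    · intro n
      have := hnn n
      show (0 : ℝ) ≤ 1 + (l.map (fun p => p n)).sum
      linarith
  obtain ⟨gg, σ, hadm, hge, hmr, hi1, hi2⟩ := main_step f₁ f₂ h₁ h₂ _ hmono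
  exact ⟨gg, ⟨hadm, σ, hmr, hi1, hi2⟩, hge⟩

def glist (f₁ f₂ : ℕ → ℝ) (h₁ : Admissible f₁) (h₂ : Admissible f₂) :
    ℕ → {l : List (ℕ → ℝ) // ∀ gg ∈ l, Admissible gg}
  | 0 => ⟨[], fun gg hgg => absurd hgg List.not_mem_nil⟩
  | i + 1 =>
    ⟨(glist f₁ f₂ h₁ h₂ i).1 ++
        [Classical.choose
          (step_exists f₁ f₂ h₁ h₂ (glist f₁ f₂ h₁ h₂ i).1 (glist f₁ f₂ h₁ h₂ i).2)],
      by
        intro gg hgg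
        rcases List.mem_append.mp hgg with hh | hh
        · exact (glist f₁ f₂ h₁ h₂ i).2 gg hh
        · rw [List.mem_singleton] at hh
          subst hh
          exact (Classical.choose_spec
            (step_exists f₁ f₂ h₁ h₂ (glist f₁ f₂ h₁ h₂ i).1 (glist f₁ f₂ h₁ h₂ i).2)).1.1⟩

def gfun (f₁ f₂ : ℕ → ℝ) (h₁ : Admissible f₁) (h₂ : Admissible f₂) (i : ℕ) : ℕ → ℝ :=
  Classical.choose (step_exists f₁ f₂ h₁ h₂ (glist f₁ f₂ h₁ h₂ i).1 (glist f₁ f₂ h₁ h₂ i).2)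

lemma gfun_spec (f₁ f₂ : ℕ → ℝ) (h₁ : Admissible f₁) (h₂ : Admissible f₂) (i : ℕ) :
    Good f₁ f₂ (gfun f₁ f₂ h₁ h₂ i) ∧
      ∀ n : ℕ, ((n : ℝ) + 1) * (1 + (((glist f₁ f₂ h₁ h₂ i).1).map (fun p => p n)).sum)
        ≤ gfun f₁ f₂ h₁ h₂ i n :=
  Classical.choose_spec (step_exists f₁ f₂ h₁ h₂ (glist f₁ f₂ h₁ h₂ i).1 (glist f₁ f₂ h₁ h₂ i).2)

lemma glist_succ (f₁ f₂ : ℕ → ℝ) (h₁ : Admissible f₁) (h₂ : Admissible f₂) (i : ℕ) :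
    (glist f₁ f₂ h₁ h₂ (i + 1)).1 = (glist f₁ f₂ h₁ h₂ i).1 ++ [gfun f₁ f₂ h₁ h₂ i] := rfl

lemma gfun_mem (f₁ f₂ : ℕ → ℝ) (h₁ : Admissible f₁) (h₂ : Admissible f₂) {j i : ℕ}
    (hji : j < i) : gfun f₁ f₂ h₁ h₂ j ∈ (glist f₁ f₂ h₁ h₂ i).1 := by
  induction i with
  | zero => omega
  | succ i ih =>
    rw [glist_succ]
    rcases Nat.lt_succ_iff_lt_or_eq.mp hji with hlt | he
    · exact List.mem_append_left _ (ih hlt)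
    · subst he
      exact List.mem_append_right _ (List.mem_singleton.mpr rfl)

lemma gfun_dom (f₁ f₂ : ℕ → ℝ) (h₁ : Admissible f₁) (h₂ : Admissible f₂) {j i : ℕ}
    (hji : j < i) (n : ℕ) :
    ((n : ℝ) + 1) * gfun f₁ f₂ h₁ h₂ j n ≤ gfun f₁ f₂ h₁ h₂ i n := by
  have hmem := gfun_mem f₁ f₂ h₁ h₂ hji
  have h2 := (gfun_spec f₁ f₂ h₁ h₂ i).2 n
  have hsum : gfun f₁ f₂ h₁ h₂ j n ≤ (((glist f₁ f₂ h₁ h₂ i).1).map (fun p => p n)).sum := by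
    apply List.single_le_sum
    · intro x hx
      obtain ⟨p, hp, rfl⟩ := List.mem_map.mp hx
      exact (((glist f₁ f₂ h₁ h₂ i).2 p hp).1 n).le
    · exact List.mem_map.mpr ⟨_, hmem, rfl⟩
  have h3 : ((n : ℝ) + 1) * gfun f₁ f₂ h₁ h₂ j n
      ≤ ((n : ℝ) + 1) * (1 + (((glist f₁ f₂ h₁ h₂ i).1).map (fun p => p n)).sum) := by
    apply mul_le_mul_of_nonneg_left (by linarith) (by positivity)
  linarith

end RealizeAux


/-- For admissible `f₁, f₂` there are infinitely many pairwise non-equivalent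
admissible functions `g_i`, each a monotone rearrangement of some
`f₁·(f₂∘σ)`, such that the scale triple `ℓ² ⊇ ℓ²_{f₁} ⊇ ℓ²_{f₁·(f₂∘σ)}`
satisfies: `(ℓ²_{f₁}, ℓ²_{f₁·(f₂∘σ)})` is scale isometric to `(ℓ², ℓ²_{f₂})`
and `(ℓ², ℓ²_{g_i})` is scale isometric to `(ℓ², ℓ²_{f₁·(f₂∘σ)})`, so the
triple realizes the invariants `([f₁], [f₂], [g_i])`. -/
theorem realize_infinitely_many_triples (f₁ f₂ : ℕ → ℝ)
    (h₁ : Admissible f₁) (h₂ : Admissible f₂) :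
    ∃ g : ℕ → (ℕ → ℝ),
      (∀ i, Admissible (g i)) ∧
      (∀ i j, i ≠ j → ¬ FEquiv (g i) (g j)) ∧
      ∀ i, ∃ σ : Equiv.Perm ℕ,
        IsMonoRearrange (twist f₁ f₂ σ) (g i) ∧
        ScaleIsometryPair f₁ (twist f₁ f₂ σ) (fun _ => 1) f₂ ∧
        ScaleIsometryPair (fun _ => 1) (g i) (fun _ => 1) (twist f₁ f₂ σ) := by

  classical
  open RealizeAux in
  refine ⟨RealizeAux.gfun f₁ f₂ h₁ h₂, fun i => (RealizeAux.gfun_spec f₁ f₂ h₁ h₂ i).1.1,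
    ?_, fun i => (RealizeAux.gfun_spec f₁ f₂ h₁ h₂ i).1.2⟩
  intro i j hij hfe
  obtain ⟨c, hc, hcb⟩ := hfe
  rcases Nat.lt_or_ge i j with hlt | hge
  · obtain ⟨n, hn⟩ := exists_nat_gt c
    have d := RealizeAux.gfun_dom f₁ f₂ h₁ h₂ hlt n
    have hb := (hcb n).2
    have hpos := ((RealizeAux.gfun_spec f₁ f₂ h₁ h₂ i).1.1).1 n
    nlinarith
  · have hlt : j < i := lt_of_le_of_ne hge (Ne.symm hij)
    obtain ⟨n, hn⟩ := exists_nat_gt c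
    have d := RealizeAux.gfun_dom f₁ f₂ h₁ h₂ hlt n
    have hb := (hcb n).1
    have hpos := ((RealizeAux.gfun_spec f₁ f₂ h₁ h₂ j).1.1).1 n
    have hcb2 : RealizeAux.gfun f₁ f₂ h₁ h₂ i n ≤ c * RealizeAux.gfun f₁ f₂ h₁ h₂ j n := by
      have hm := mul_le_mul_of_nonneg_left hb hc.le
      rwa [← mul_assoc, mul_one_div_cancel hc.ne', one_mul] at hm
    nlinarith
end
end
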